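/- arXiv:1608.03941 — 13 statements merged into one kernel-verified Lean document; each statement's English description precedes it below -/
import Mathlib

section
/- Let f, g, h, k : ℝ → ℝ be smooth, let δ₁, δ₂, δ₃, δ₄ be real constants with δ₁δ₃ ≠ 0, and let T : ℝ → ℝ be a smooth bijection with T'(t) ≠ 0 for all t. If u : ℝ × ℝ → ℝ is a smooth solution of u_t + f(t)u_x + g(t)u u_x + k(t)u_{xx} + h(t)u_{xxt} = 0, then the function ũ defined by ũ(T(t), δ₁x + δ₂) = δ₃u(t,x) + δ₄ is a smooth solution of ũ_{t̃} + f̃(t̃)ũ_{x̃} + g̃(t̃)ũ ũ_{x̃} + k̃(t̃)ũ_{x̃x̃} + h̃(t̃)ũ_{x̃x̃t̃} = 0, where the transformed coefficients are given by k̃(T(t)) = δ₁²k(t)/T'(t), f̃(T(t)) = δ₁(δ₃f(t) − δ₄g(t))/(T'(t)δ₃), g̃(T(t)) = δ₁g(t)/(T'(t)δ₃), and h̃(T(t)) = δ₁²h(t). -/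
/-- Partial derivative in the first (time) variable. -/
noncomputable def partialT (v : ℝ → ℝ → ℝ) (t x : ℝ) : ℝ := deriv (fun s => v s x) t

/-- Partial derivative in the second (space) variable. -/
noncomputable def partialX (v : ℝ → ℝ → ℝ) (t x : ℝ) : ℝ := deriv (fun y => v t y) x

/-- Second partial derivative in the space variable. -/
noncomputable def partialXX (v : ℝ → ℝ → ℝ) (t x : ℝ) : ℝ := deriv (fun y => partialX v t y) x

/-- Mixed third-order partial derivative: twice in space, once in time. -/
noncomputable def partialXXT (v : ℝ → ℝ → ℝ) (t x : ℝ) : ℝ := deriv (fun s => partialXX v s x) t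

lemma bbmb_hasDerivAt_sliceX {v : ℝ → ℝ → ℝ}
    (hv : ContDiff ℝ (⊤ : ℕ∞) (fun p : ℝ × ℝ => v p.1 p.2)) (t x : ℝ) :
    HasDerivAt (fun y => v t y) (partialX v t x) x := by
  have hsl : ContDiff ℝ (⊤ : ℕ∞) (fun y : ℝ => v t y) :=
    hv.comp (contDiff_const.prodMk contDiff_id)
  exact (hsl.differentiable (by simp) x).hasDerivAt

lemma bbmb_hasDerivAt_sliceT {v : ℝ → ℝ → ℝ}
    (hv : ContDiff ℝ (⊤ : ℕ∞) (fun p : ℝ × ℝ => v p.1 p.2)) (t x : ℝ) :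
    HasDerivAt (fun s => v s x) (partialT v t x) t := by
  have hsl : ContDiff ℝ (⊤ : ℕ∞) (fun s : ℝ => v s x) :=
    hv.comp (contDiff_id.prodMk contDiff_const)
  exact (hsl.differentiable (by simp) t).hasDerivAt

lemma bbmb_contDiff_partialX {v : ℝ → ℝ → ℝ}
    (hv : ContDiff ℝ (⊤ : ℕ∞) (fun p : ℝ × ℝ => v p.1 p.2)) :
    ContDiff ℝ (⊤ : ℕ∞) (fun p : ℝ × ℝ => partialX v p.1 p.2) := by
  have key : (fun p : ℝ × ℝ => partialX v p.1 p.2)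
      = fun p : ℝ × ℝ => fderiv ℝ (fun q : ℝ × ℝ => v q.1 q.2) p ((0 : ℝ), (1 : ℝ)) := by
    funext p
    have hinner : HasDerivAt (fun y : ℝ => ((p.1, y) : ℝ × ℝ)) ((0 : ℝ), (1 : ℝ)) p.2 :=
      (hasDerivAt_const p.2 p.1).prodMk (hasDerivAt_id p.2)
    have houter := (hv.differentiable (by simp) (p.1, p.2)).hasFDerivAt
    have := houter.comp_hasDerivAt p.2 hinner
    exact this.deriv
  rw [key]
  exact (hv.fderiv_right (m := (⊤ : ℕ∞)) (by exact_mod_cast le_top)).clm_apply contDiff_const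

lemma bbmb_inv_contDiff {T : ℝ → ℝ} (hT : ContDiff ℝ (⊤ : ℕ∞) T)
    (hTbij : Function.Bijective T) (hT' : ∀ t, deriv T t ≠ 0) :
    ContDiff ℝ (⊤ : ℕ∞) (Function.invFun T) := by
  have hright : Function.RightInverse (Function.invFun T) T :=
    Function.rightInverse_invFun hTbij.2
  rw [contDiff_iff_contDiffAt]
  intro s
  obtain ⟨a, rfl⟩ := hTbij.2 s
  have hda : HasDerivAt T (deriv T a) a :=
    (hT.differentiable (by simp) a).hasDerivAt
  have hFD := hda.hasFDerivAt_equiv (hT' a)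
  have hCD : ContDiffAt ℝ (⊤ : ℕ∞) T a := hT.contDiffAt
  have hone : ((⊤ : ℕ∞) : WithTop ℕ∞) ≠ 0 := by simp
  have hinv := hCD.to_localInverse (f' := ContinuousLinearEquiv.unitsEquivAut ℝ
    (Units.mk0 (deriv T a) (hT' a))) hFD hone
  refine hinv.congr_of_eventuallyEq ?_
  have hev := (hCD.hasStrictFDerivAt' hFD hone).eventually_right_inverse
  exact hev.mono fun y hy => (hTbij.1 ((hright y).trans hy.symm))

/-- the equivalence transformations of the class of variable-coefficient
BBMB equations `u_t + f(t)u_x + g(t)u u_x + k(t)u_xx + h(t)u_xxt = 0` map solutions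
to solutions of the transformed equation. -/
theorem stmt_0 (f g h k : ℝ → ℝ)
    (hf : ContDiff ℝ (⊤ : ℕ∞) f) (hg : ContDiff ℝ (⊤ : ℕ∞) g)
    (hh : ContDiff ℝ (⊤ : ℕ∞) h) (hk : ContDiff ℝ (⊤ : ℕ∞) k)
    (δ₁ δ₂ δ₃ δ₄ : ℝ) (hδ : δ₁ * δ₃ ≠ 0)
    (T : ℝ → ℝ) (hT : ContDiff ℝ (⊤ : ℕ∞) T) (hTbij : Function.Bijective T)
    (hT' : ∀ t, deriv T t ≠ 0)
    (u : ℝ → ℝ → ℝ) (hu : ContDiff ℝ (⊤ : ℕ∞) (fun p : ℝ × ℝ => u p.1 p.2))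
    (hsol : ∀ t x, partialT u t x + f t * partialX u t x + g t * u t x * partialX u t x
      + k t * partialXX u t x + h t * partialXXT u t x = 0)
    (ftil gtil htil ktil : ℝ → ℝ)
    (hktil : ∀ t, ktil (T t) = δ₁ ^ 2 / deriv T t * k t)
    (hftil : ∀ t, ftil (T t) = δ₁ / (deriv T t * δ₃) * (δ₃ * f t - δ₄ * g t))
    (hgtil : ∀ t, gtil (T t) = δ₁ / (deriv T t * δ₃) * g t)
    (hhtil : ∀ t, htil (T t) = δ₁ ^ 2 * h t)
    (util : ℝ → ℝ → ℝ)
    (hutil : ∀ t x, util (T t) (δ₁ * x + δ₂) = δ₃ * u t x + δ₄) :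
    ContDiff ℝ (⊤ : ℕ∞) (fun p : ℝ × ℝ => util p.1 p.2) ∧
    ∀ t x, partialT util t x + ftil t * partialX util t x
      + gtil t * util t x * partialX util t x
      + ktil t * partialXX util t x + htil t * partialXXT util t x = 0 := by
  have hδ₁ : δ₁ ≠ 0 := fun h0 => hδ (by rw [h0, zero_mul])
  have hδ₃ : δ₃ ≠ 0 := fun h0 => hδ (by rw [h0, mul_zero])
  have hone : ((⊤ : ℕ∞) : WithTop ℕ∞) ≠ 0 := by simp
  set Ti := Function.invFun T with hTidef
  have hleft : ∀ t, Ti (T t) = t := fun t => Function.leftInverse_invFun hTbij.1 t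
  have hright : ∀ s, T (Ti s) = s := fun s => Function.rightInverse_invFun hTbij.2 s
  have hTi : ContDiff ℝ (⊤ : ℕ∞) Ti := bbmb_inv_contDiff hT hTbij hT'
  have util_eq : ∀ s y, util s y = δ₃ * u (Ti s) ((y - δ₂) / δ₁) + δ₄ := by
    intro s y
    have h2 : δ₁ * ((y - δ₂) / δ₁) + δ₂ = y := by field_simp; ring
    calc util s y = util (T (Ti s)) (δ₁ * ((y - δ₂) / δ₁) + δ₂) := by rw [hright s, h2]
      _ = δ₃ * u (Ti s) ((y - δ₂) / δ₁) + δ₄ := hutil _ _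
  -- smoothness of util
  have hsmooth : ContDiff ℝ (⊤ : ℕ∞) (fun p : ℝ × ℝ => util p.1 p.2) := by
    have heq : (fun p : ℝ × ℝ => util p.1 p.2)
        = fun p : ℝ × ℝ => δ₃ * u (Ti p.1) ((p.2 - δ₂) / δ₁) + δ₄ :=
      funext fun p => util_eq p.1 p.2
    rw [heq]
    exact (contDiff_const.mul (hu.comp ((hTi.comp contDiff_fst).prodMk
      ((contDiff_snd.sub contDiff_const).div_const δ₁)))).add contDiff_const
  refine ⟨hsmooth, ?_⟩
  -- spatial derivative formulas, valid at every point
  have hX : ∀ s y, partialX util s y = δ₃ * δ₁⁻¹ * partialX u (Ti s) ((y - δ₂) / δ₁) := by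
    intro s y
    have hfun : (fun y' => util s y') = fun y' => δ₃ * u (Ti s) ((y' - δ₂) / δ₁) + δ₄ :=
      funext fun y' => util_eq s y'
    have hinner : HasDerivAt (fun y' : ℝ => (y' - δ₂) / δ₁) (1 / δ₁) y := by
      simpa using ((hasDerivAt_id y).sub_const δ₂).div_const δ₁
    have hcomp : HasDerivAt (fun y' => δ₃ * u (Ti s) ((y' - δ₂) / δ₁) + δ₄)
        (δ₃ * (partialX u (Ti s) ((y - δ₂) / δ₁) * (1 / δ₁))) y :=
      (((bbmb_hasDerivAt_sliceX hu (Ti s) ((y - δ₂) / δ₁)).comp y hinner).const_mul δ₃).add_const δ₄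
    have : partialX util s y = δ₃ * (partialX u (Ti s) ((y - δ₂) / δ₁) * (1 / δ₁)) := by
      unfold partialX; rw [hfun]; exact hcomp.deriv
    rw [this]; ring
  have huX : ContDiff ℝ (⊤ : ℕ∞) (fun p : ℝ × ℝ => partialX u p.1 p.2) :=
    bbmb_contDiff_partialX hu
  have hXX : ∀ s y, partialXX util s y
      = δ₃ * δ₁⁻¹ * δ₁⁻¹ * partialXX u (Ti s) ((y - δ₂) / δ₁) := by
    intro s y
    have hfun : (fun y' => partialX util s y')
        = fun y' => δ₃ * δ₁⁻¹ * partialX u (Ti s) ((y' - δ₂) / δ₁) :=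
      funext fun y' => hX s y'
    have hinner : HasDerivAt (fun y' : ℝ => (y' - δ₂) / δ₁) (1 / δ₁) y := by
      simpa using ((hasDerivAt_id y).sub_const δ₂).div_const δ₁
    have houter : HasDerivAt (fun y' => partialX u (Ti s) y')
        (partialXX u (Ti s) ((y - δ₂) / δ₁)) ((y - δ₂) / δ₁) :=
      bbmb_hasDerivAt_sliceX (v := fun a b => partialX u a b) huX (Ti s) ((y - δ₂) / δ₁)
    have hcomp : HasDerivAt (fun y' => δ₃ * δ₁⁻¹ * partialX u (Ti s) ((y' - δ₂) / δ₁))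
        (δ₃ * δ₁⁻¹ * (partialXX u (Ti s) ((y - δ₂) / δ₁) * (1 / δ₁))) y :=
      (houter.comp y hinner).const_mul (δ₃ * δ₁⁻¹)
    have : partialXX util s y = δ₃ * δ₁⁻¹ * (partialXX u (Ti s) ((y - δ₂) / δ₁) * (1 / δ₁)) := by
      unfold partialXX; rw [hfun]; exact hcomp.deriv
    rw [this]; ring
  -- derivative of the inverse time change
  have hTinvDeriv : ∀ t, HasDerivAt Ti (deriv T t)⁻¹ (T t) := by
    intro t
    have hTiDiff := hTi.differentiable hone
    have hd : HasDerivAt (fun s => Ti (T s)) (deriv Ti (T t) * deriv T t) t :=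
      (hTiDiff (T t)).hasDerivAt.comp t (hT.differentiable hone t).hasDerivAt
    have hid : HasDerivAt (fun s => Ti (T s)) 1 t :=
      (hasDerivAt_id t).congr_of_eventuallyEq (Filter.Eventually.of_forall fun s => hleft s)
    have huniq : deriv Ti (T t) * deriv T t = 1 := hd.unique hid
    have : deriv Ti (T t) = (deriv T t)⁻¹ := eq_inv_of_mul_eq_one_left huniq
    exact this ▸ (hTiDiff (T t)).hasDerivAt
  -- the PDE
  intro s y
  obtain ⟨t, rfl⟩ := hTbij.2 s
  set x : ℝ := (y - δ₂) / δ₁ with hxdef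
  have hTt : Ti (T t) = t := hleft t
  -- time derivative of util
  have hTpart : partialT util (T t) y = δ₃ * (partialT u t x * (deriv T t)⁻¹) := by
    have hfun : (fun s' => util s' y) = fun s' => δ₃ * u (Ti s') x + δ₄ :=
      funext fun s' => util_eq s' y
    have houter : HasDerivAt (fun s' => u s' x) (partialT u t x) (Ti (T t)) := by
      rw [hTt]; exact bbmb_hasDerivAt_sliceT hu t x
    have hcomp : HasDerivAt (fun s' => δ₃ * u (Ti s') x + δ₄)
        (δ₃ * (partialT u t x * (deriv T t)⁻¹)) (T t) :=
      ((houter.comp (T t) (hTinvDeriv t)).const_mul δ₃).add_const δ₄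
    unfold partialT; rw [hfun]; exact hcomp.deriv
  -- mixed third derivative of util
  have huXX : ContDiff ℝ (⊤ : ℕ∞) (fun p : ℝ × ℝ => partialXX u p.1 p.2) :=
    bbmb_contDiff_partialX (v := fun a b => partialX u a b) huX
  have hXXT : partialXXT util (T t) y
      = δ₃ * δ₁⁻¹ * δ₁⁻¹ * (partialXXT u t x * (deriv T t)⁻¹) := by
    have hfun : (fun s' => partialXX util s' y)
        = fun s' => δ₃ * δ₁⁻¹ * δ₁⁻¹ * partialXX u (Ti s') x :=
      funext fun s' => hXX s' y
    have houter : HasDerivAt (fun s' => partialXX u s' x) (partialXXT u t x) (Ti (T t)) := by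
      rw [hTt]
      exact bbmb_hasDerivAt_sliceT (v := fun a b => partialXX u a b) huXX t x
    have hcomp : HasDerivAt (fun s' => δ₃ * δ₁⁻¹ * δ₁⁻¹ * partialXX u (Ti s') x)
        (δ₃ * δ₁⁻¹ * δ₁⁻¹ * (partialXXT u t x * (deriv T t)⁻¹)) (T t) :=
      (houter.comp (T t) (hTinvDeriv t)).const_mul (δ₃ * δ₁⁻¹ * δ₁⁻¹)
    unfold partialXXT; rw [hfun]; exact hcomp.deriv
  have huval : util (T t) y = δ₃ * u t x + δ₄ := by rw [util_eq (T t) y, hTt]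
  have hXval : partialX util (T t) y = δ₃ * δ₁⁻¹ * partialX u t x := by rw [hX (T t) y, hTt]
  have hXXval : partialXX util (T t) y = δ₃ * δ₁⁻¹ * δ₁⁻¹ * partialXX u t x := by
    rw [hXX (T t) y, hTt]
  rw [hTpart, hXXT, huval, hXval, hXXval, hktil t, hftil t, hgtil t, hhtil t]
  have hc := hT' t
  have hs := hsol t x
  field_simp
  linear_combination δ₃ * hs
end

section
/- Let K, H, F : ℝ → ℝ be smooth, and let δ₀, δ₁, δ₂, δ₃ be real constants with δ₁δ₃ ≠ 0. If u : ℝ × ℝ → ℝ is a smooth solution of u_t + u u_x + K(t)u_{xx} + H(t)u_{xxt} = F(t), then the function ũ defined by ũ((δ₁/δ₃)t + δ₀, δ₁x + δ₂) = δ₃u(t,x) is a smooth solution of ũ_{t̃} + ũ ũ_{x̃} + K̃(t̃)ũ_{x̃x̃} + H̃(t̃)ũ_{x̃x̃t̃} = F̃(t̃), where K̃((δ₁/δ₃)t + δ₀) = δ₁δ₃K(t), H̃((δ₁/δ₃)t + δ₀) = δ₁²H(t), and F̃((δ₁/δ₃)t + δ₀) = (δ₃²/δ₁)F(t). -/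
lemma aff_hasDerivAt (c d y : ℝ) : HasDerivAt (fun y : ℝ => c * y + d) c y := by
  simpa using ((hasDerivAt_id y).const_mul c).add_const d

lemma deriv_aff_comp {h : ℝ → ℝ} (hh : Differentiable ℝ h) (c d y : ℝ) :
    deriv (fun y => h (c * y + d)) y = c * deriv h (c * y + d) := by
  have := ((hh (c*y+d)).hasDerivAt.comp y (aff_hasDerivAt c d y)).deriv
  exact this.trans (mul_comm _ _)

lemma sliceX_diff {g : ℝ×ℝ→ℝ} (hg : Differentiable ℝ g) (t : ℝ) :
    Differentiable ℝ (fun x => g (t, x)) :=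
  hg.comp ((differentiable_const t).prodMk differentiable_id)

lemma sliceT_diff {g : ℝ×ℝ→ℝ} (hg : Differentiable ℝ g) (x : ℝ) :
    Differentiable ℝ (fun t => g (t, x)) :=
  hg.comp (differentiable_id.prodMk (differentiable_const x))

lemma deriv_sliceX {g : ℝ×ℝ→ℝ} (hg : Differentiable ℝ g) (t x : ℝ) :
    deriv (fun y => g (t, y)) x = fderiv ℝ g (t, x) (0, 1) := by
  have h1 : HasDerivAt (fun y : ℝ => ((t, y) : ℝ×ℝ)) ((0 : ℝ), (1 : ℝ)) x :=
    (hasDerivAt_const x t).prodMk (hasDerivAt_id x)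
  exact ((hg (t, x)).hasFDerivAt.comp_hasDerivAt x h1).deriv

lemma deriv_sliceT {g : ℝ×ℝ→ℝ} (hg : Differentiable ℝ g) (t x : ℝ) :
    deriv (fun s => g (s, x)) t = fderiv ℝ g (t, x) (1, 0) := by
  have h1 : HasDerivAt (fun s : ℝ => ((s, x) : ℝ×ℝ)) ((1 : ℝ), (0 : ℝ)) t :=
    (hasDerivAt_id t).prodMk (hasDerivAt_const t x)
  exact ((hg (t, x)).hasFDerivAt.comp_hasDerivAt t h1).deriv

lemma topDiff {g : ℝ×ℝ→ℝ} (hg : ContDiff ℝ (⊤:ℕ∞) g) : Differentiable ℝ g :=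
  hg.differentiable (by simp)

lemma contDiff_fderiv_apply {g : ℝ×ℝ→ℝ} (hg : ContDiff ℝ (⊤:ℕ∞) g) (v : ℝ×ℝ) :
    ContDiff ℝ (⊤:ℕ∞) (fun p => fderiv ℝ g p v) :=
  (hg.fderiv_right (by exact_mod_cast le_top)).clm_apply contDiff_const

/-- the equivalence transformations of the class of BBMB equations with
a forcing term `u_t + u u_x + K(t)u_xx + H(t)u_xxt = F(t)` map solutions to solutions
of the transformed equation. -/
theorem stmt_1 (K H F : ℝ → ℝ)
    (hK : ContDiff ℝ (⊤ : ℕ∞) K) (hH : ContDiff ℝ (⊤ : ℕ∞) H) (hF : ContDiff ℝ (⊤ : ℕ∞) F)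
    (δ₀ δ₁ δ₂ δ₃ : ℝ) (hδ : δ₁ * δ₃ ≠ 0)
    (u : ℝ → ℝ → ℝ) (hu : ContDiff ℝ (⊤ : ℕ∞) (fun p : ℝ × ℝ => u p.1 p.2))
    (hsol : ∀ t x, partialT u t x + u t x * partialX u t x
      + K t * partialXX u t x + H t * partialXXT u t x = F t)
    (Ktil Htil Ftil : ℝ → ℝ)
    (hKtil : ∀ t, Ktil (δ₁ / δ₃ * t + δ₀) = δ₁ * δ₃ * K t)
    (hHtil : ∀ t, Htil (δ₁ / δ₃ * t + δ₀) = δ₁ ^ 2 * H t)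
    (hFtil : ∀ t, Ftil (δ₁ / δ₃ * t + δ₀) = δ₃ ^ 2 / δ₁ * F t)
    (util : ℝ → ℝ → ℝ)
    (hutil : ∀ t x, util (δ₁ / δ₃ * t + δ₀) (δ₁ * x + δ₂) = δ₃ * u t x) :
    ContDiff ℝ (⊤ : ℕ∞) (fun p : ℝ × ℝ => util p.1 p.2) ∧
    ∀ t x, partialT util t x + util t x * partialX util t x
      + Ktil t * partialXX util t x + Htil t * partialXXT util t x = Ftil t := by
  have hδ₁ : δ₁ ≠ 0 := fun h => hδ (by simp [h])
  have hδ₃ : δ₃ ≠ 0 := fun h => hδ (by simp [h])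
  set a : ℝ := δ₃ / δ₁ with ha
  set b : ℝ := -(δ₃ / δ₁ * δ₀) with hb
  set c : ℝ := 1 / δ₁ with hc
  set d : ℝ := -(δ₂ / δ₁) with hd
  set U : ℝ × ℝ → ℝ := fun p => u p.1 p.2 with hUdef
  have hU : ContDiff ℝ (⊤ : ℕ∞) U := hu
  have hUd : Differentiable ℝ U := topDiff hU
  -- key closed formula for util
  have key : ∀ s y, util s y = δ₃ * U (a * s + b, c * y + d) := by
    intro s y
    have h := hutil (a * s + b) (c * y + d)
    have e1 : δ₁ / δ₃ * (a * s + b) + δ₀ = s := by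
      rw [ha, hb]; field_simp; ring
    have e2 : δ₁ * (c * y + d) + δ₂ = y := by
      rw [hc, hd]; field_simp; ring
    rw [e1, e2] at h
    exact h
  -- the smooth derivative functions of U
  set U1 : ℝ × ℝ → ℝ := fun p => fderiv ℝ U p (0, 1) with hU1def
  have hU1 : ContDiff ℝ (⊤ : ℕ∞) U1 := contDiff_fderiv_apply hU _
  have hU1d : Differentiable ℝ U1 := topDiff hU1
  set U2 : ℝ × ℝ → ℝ := fun p => fderiv ℝ U1 p (0, 1) with hU2def
  have hU2 : ContDiff ℝ (⊤ : ℕ∞) U2 := contDiff_fderiv_apply hU1 _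
  have hU2d : Differentiable ℝ U2 := topDiff hU2
  -- partials of u in terms of U1, U2
  have hpx : ∀ t x, partialX u t x = U1 (t, x) := fun t x => deriv_sliceX hUd t x
  have hpt : ∀ t x, partialT u t x = fderiv ℝ U (t, x) (1, 0) := fun t x => deriv_sliceT hUd t x
  have hpxx : ∀ t x, partialXX u t x = U2 (t, x) := by
    intro t x
    have : (fun y => partialX u t y) = fun y => U1 (t, y) := funext fun y => hpx t y
    rw [partialXX, this, deriv_sliceX hU1d]
  have hpxxt : ∀ t x, partialXXT u t x = fderiv ℝ U2 (t, x) (1, 0) := by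
    intro t x
    have : (fun s => partialXX u s x) = fun s => U2 (s, x) := funext fun s => hpxx _ x
    rw [partialXXT, this, deriv_sliceT hU2d]
  -- smoothness of util
  have hLm : ContDiff ℝ (⊤ : ℕ∞) (fun p : ℝ × ℝ => ((a * p.1 + b, c * p.2 + d) : ℝ × ℝ)) :=
    ((contDiff_const.mul contDiff_fst).add contDiff_const).prodMk
      ((contDiff_const.mul contDiff_snd).add contDiff_const)
  have hUtil : ContDiff ℝ (⊤ : ℕ∞) (fun p : ℝ × ℝ => util p.1 p.2) := by
    have heq : (fun p : ℝ × ℝ => util p.1 p.2)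
        = fun p : ℝ × ℝ => δ₃ * U (a * p.1 + b, c * p.2 + d) :=
      funext fun p => key p.1 p.2
    rw [heq]
    exact contDiff_const.mul (hU.comp hLm)
  refine ⟨hUtil, fun s y => ?_⟩
  set t : ℝ := a * s + b with ht
  set x : ℝ := c * y + d with hx
  -- partials of util
  have pxu : ∀ s y, partialX util s y = δ₃ * (c * U1 (a * s + b, c * y + d)) := by
    intro s y
    have h1 : (fun y => util s y) = fun y => δ₃ * U (a * s + b, c * y + d) :=
      funext fun y => key s y
    have hdiff : Differentiable ℝ (fun x => U (a * s + b, x)) := sliceX_diff hUd _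
    have hcd : DifferentiableAt ℝ (fun y => U (a * s + b, c * y + d)) y :=
      (hdiff _).comp _ (aff_hasDerivAt c d y).differentiableAt
    have h2 : deriv (fun y => U (a * s + b, c * y + d)) y
        = c * deriv (fun x => U (a * s + b, x)) (c * y + d) := deriv_aff_comp hdiff c d y
    rw [partialX, h1, deriv_const_mul _ hcd, h2, deriv_sliceX hUd]
  have ptu : partialT util s y = δ₃ * (a * fderiv ℝ U (a * s + b, c * y + d) (1, 0)) := by
    have h1 : (fun s => util s y) = fun s => δ₃ * U (a * s + b, c * y + d) :=
      funext fun s => key s y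
    have hdiff : Differentiable ℝ (fun t' => U (t', c * y + d)) := sliceT_diff hUd _
    have hcd : DifferentiableAt ℝ (fun s => U (a * s + b, c * y + d)) s :=
      (hdiff _).comp _ (aff_hasDerivAt a b s).differentiableAt
    have h2 : deriv (fun s => U (a * s + b, c * y + d)) s
        = a * deriv (fun t' => U (t', c * y + d)) (a * s + b) := deriv_aff_comp hdiff a b s
    rw [partialT, h1, deriv_const_mul _ hcd, h2, deriv_sliceT hUd]
  have pxxu : ∀ s y, partialXX util s y = δ₃ * c * (c * U2 (a * s + b, c * y + d)) := by
    intro s y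
    have h1 : (fun y => partialX util s y) = fun y => δ₃ * c * U1 (a * s + b, c * y + d) := by
      funext y; rw [pxu s y]; ring
    have hdiff : Differentiable ℝ (fun x => U1 (a * s + b, x)) := sliceX_diff hU1d _
    have hcd : DifferentiableAt ℝ (fun y => U1 (a * s + b, c * y + d)) y :=
      (hdiff _).comp _ (aff_hasDerivAt c d y).differentiableAt
    have h2 : deriv (fun y => U1 (a * s + b, c * y + d)) y
        = c * deriv (fun x => U1 (a * s + b, x)) (c * y + d) := deriv_aff_comp hdiff c d y
    rw [partialXX, h1, deriv_const_mul _ hcd, h2, deriv_sliceX hU1d]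
  have pxxtu : partialXXT util s y
      = δ₃ * c * c * (a * fderiv ℝ U2 (a * s + b, c * y + d) (1, 0)) := by
    have h1 : (fun s => partialXX util s y) = fun s => δ₃ * c * c * U2 (a * s + b, c * y + d) := by
      funext s; rw [pxxu s y]; ring
    have hdiff : Differentiable ℝ (fun t' => U2 (t', c * y + d)) := sliceT_diff hU2d _
    have hcd : DifferentiableAt ℝ (fun s => U2 (a * s + b, c * y + d)) s :=
      (hdiff _).comp _ (aff_hasDerivAt a b s).differentiableAt
    have h2 : deriv (fun s => U2 (a * s + b, c * y + d)) s
        = a * deriv (fun t' => U2 (t', c * y + d)) (a * s + b) := deriv_aff_comp hdiff a b s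
    rw [partialXXT, h1, deriv_const_mul _ hcd, h2, deriv_sliceT hU2d]
  -- transformed coefficients at s
  have hs : s = δ₁ / δ₃ * t + δ₀ := by rw [ht, ha, hb]; field_simp; ring
  have hKs : Ktil s = δ₁ * δ₃ * K t := by rw [hs]; exact hKtil t
  have hHs : Htil s = δ₁ ^ 2 * H t := by rw [hs]; exact hHtil t
  have hFs : Ftil s = δ₃ ^ 2 / δ₁ * F t := by rw [hs]; exact hFtil t
  have hUval : util s y = δ₃ * u t x := by rw [key s y]
  have hE := hsol t x
  rw [hpt, hpx, hpxx, hpxxt] at hE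
  rw [ptu, hUval, pxu s y, pxxu s y, pxxtu, hKs, hHs, hFs, ← ht, ← hx]
  rw [ha, hc]
  field_simp
  linear_combination hE
end

section
/- Let f, g, h, k : ℝ → ℝ be smooth with g(t) ≠ 0 for all t, and set T(t) = ∫₀ᵗ g(s)ds. If u : ℝ × ℝ → ℝ is a smooth solution of u_t + f(t)u_x + g(t)u u_x + k(t)u_{xx} + h(t)u_{xxt} = 0, then the function v defined by v(T(t), x) = u(t,x) + f(t)/g(t) is a smooth solution of v_{t̃} + v v_{x̃} + K(t̃)v_{x̃x̃} + H(t̃)v_{x̃x̃t̃} = F(t̃), where K(T(t)) = k(t)/g(t), H(T(t)) = h(t), and F(T(t)) = (1/g(t))·d/dt(f(t)/g(t)). -/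
/-- Auxiliary: the spatial partial derivative of a jointly smooth function is jointly smooth. -/
theorem contDiff_partialX_aux {u : ℝ → ℝ → ℝ}
    (hu : ContDiff ℝ (⊤ : ℕ∞) (fun p : ℝ × ℝ => u p.1 p.2)) :
    ContDiff ℝ (⊤ : ℕ∞) (fun p : ℝ × ℝ => partialX u p.1 p.2) := by
  have h1 : ContDiff ℝ (⊤ : ℕ∞) (Function.uncurry fun (p : ℝ × ℝ) (y : ℝ) => u p.1 y) :=
    hu.comp ((contDiff_fst.comp contDiff_fst).prodMk contDiff_snd)
  have h2 : ContDiff ℝ (⊤ : ℕ∞)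
      (fun p : ℝ × ℝ => fderiv ℝ (fun y => u p.1 y) p.2 (1 : ℝ)) :=
    h1.fderiv_apply contDiff_snd contDiff_const (by simp)
  have h3 : (fun p : ℝ × ℝ => partialX u p.1 p.2)
      = fun p : ℝ × ℝ => fderiv ℝ (fun y => u p.1 y) p.2 (1 : ℝ) := by
    funext p
    simp only [partialX]
    exact (fderiv_apply_one_eq_deriv).symm
  rw [h3]; exact h2

/-- the point transformation `t̃ = ∫ g dt`, `x̃ = x`, `v = u + f/g` maps
solutions of `u_t + f(t)u_x + g(t)u u_x + k(t)u_xx + h(t)u_xxt = 0` to solutions of the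
imaged BBMB equation with a forcing term `v_t + v v_x + K(t)v_xx + H(t)v_xxt = F(t)`. -/
theorem stmt_2 (f g h k : ℝ → ℝ)
    (hf : ContDiff ℝ (⊤ : ℕ∞) f) (hg : ContDiff ℝ (⊤ : ℕ∞) g)
    (hh : ContDiff ℝ (⊤ : ℕ∞) h) (hk : ContDiff ℝ (⊤ : ℕ∞) k)
    (hg0 : ∀ t, g t ≠ 0)
    (T : ℝ → ℝ) (hTdef : ∀ t, T t = ∫ s in (0:ℝ)..t, g s)
    (u : ℝ → ℝ → ℝ) (hu : ContDiff ℝ (⊤ : ℕ∞) (fun p : ℝ × ℝ => u p.1 p.2))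
    (hsol : ∀ t x, partialT u t x + f t * partialX u t x + g t * u t x * partialX u t x
      + k t * partialXX u t x + h t * partialXXT u t x = 0)
    (K H F : ℝ → ℝ)
    (hK : ∀ t, K (T t) = k t / g t)
    (hH : ∀ t, H (T t) = h t)
    (hF : ∀ t, F (T t) = 1 / g t * deriv (fun s => f s / g s) t)
    (v : ℝ → ℝ → ℝ)
    (hv : ∀ t x, v (T t) x = u t x + f t / g t) :
    ContDiffOn ℝ (⊤ : ℕ∞) (fun p : ℝ × ℝ => v p.1 p.2) (Set.range T ×ˢ Set.univ) ∧
    ∀ t x, partialT v (T t) x + v (T t) x * partialX v (T t) x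
      + K (T t) * partialXX v (T t) x + H (T t) * partialXXT v (T t) x = F (T t) := by
  have top1 : ((⊤ : ℕ∞) : WithTop ℕ∞) ≠ 0 := by simp
  have hq : ContDiff ℝ (⊤ : ℕ∞) (fun s => f s / g s) := hf.div hg hg0
  have hTfun : T = fun t => ∫ s in (0:ℝ)..t, g s := funext hTdef
  have hTg : ∀ t, HasStrictDerivAt T (g t) t := by
    intro t; rw [hTfun]; exact hg.continuous.integral_hasStrictDerivAt 0 t
  have hTd : ∀ t, HasDerivAt T (g t) t := fun t => (hTg t).hasDerivAt
  have hTcd : ContDiff ℝ (⊤ : ℕ∞) T := by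
    rw [contDiff_infty_iff_deriv]
    refine ⟨fun t => (hTd t).differentiableAt, ?_⟩
    have hd : deriv T = g := funext fun t => (hTd t).deriv
    rw [hd]; exact hg
  -- local inverses of T
  have key : ∀ t : ℝ, ∃ S : ℝ → ℝ, S (T t) = t ∧ (∀ᶠ τ in nhds (T t), T (S τ) = τ) ∧
      HasDerivAt S (g t)⁻¹ (T t) ∧ ContDiffAt ℝ (⊤ : ℕ∞) S (T t) := by
    intro t
    set e : ℝ ≃L[ℝ] ℝ := ContinuousLinearEquiv.unitsEquivAut ℝ (Units.mk0 (g t) (hg0 t)) with he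
    have hfde : HasFDerivAt T (e : ℝ →L[ℝ] ℝ) t := by
      have hfd := (hTd t).hasFDerivAt
      have hee : (e : ℝ →L[ℝ] ℝ) = ContinuousLinearMap.toSpanSingleton ℝ (g t) := by
        ext; simp [he]
      rw [hee]; exact hfd
    have hS := hTcd.contDiffAt.hasStrictFDerivAt' hfde top1
    refine ⟨hS.localInverse T _ t, hS.localInverse_apply_image, hS.eventually_right_inverse,
      ?_, ?_⟩
    · have hd := hS.to_localInverse.hasFDerivAt.hasDerivAt
      convert hd using 1
      · rfl
      · rfl
      simp [he]
    · exact hTcd.contDiffAt.to_localInverse hfde top1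
  -- smoothness of slices and partial derivatives of u
  have hux : ∀ x : ℝ, ContDiff ℝ (⊤ : ℕ∞) (fun s => u s x) := fun x =>
    hu.comp (contDiff_id.prodMk contDiff_const)
  have P1 : ContDiff ℝ (⊤ : ℕ∞) (fun p : ℝ × ℝ => partialX u p.1 p.2) :=
    contDiff_partialX_aux hu
  have P2 : ContDiff ℝ (⊤ : ℕ∞) (fun p : ℝ × ℝ => partialXX u p.1 p.2) :=
    contDiff_partialX_aux P1
  -- spatial derivatives of v along the range of T
  have hvx : ∀ t x, partialX v (T t) x = partialX u t x := by
    intro t x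
    have hfun : (fun y => v (T t) y) = fun y => u t y + f t / g t := funext fun y => hv t y
    simp only [partialX, hfun, deriv_add_const]
  have hvxx : ∀ t x, partialXX v (T t) x = partialXX u t x := by
    intro t x
    have hfun : (fun y => partialX v (T t) y) = fun y => partialX u t y :=
      funext fun y => hvx t y
    simp only [partialXX, hfun]
  constructor
  · -- smoothness of v on range T ×ˢ univ
    intro p hp
    obtain ⟨t, ht⟩ := hp.1
    obtain ⟨S, hS0, hSr, hS', hScd⟩ := key t
    rw [ht] at hS0 hSr hS' hScd
    have hSfst : ContDiffAt ℝ (⊤ : ℕ∞) (fun p' : ℝ × ℝ => S p'.1) p :=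
      hScd.comp p contDiffAt_fst
    have hcd : ContDiffAt ℝ (⊤ : ℕ∞)
        (fun p' : ℝ × ℝ => u (S p'.1) p'.2 + f (S p'.1) / g (S p'.1)) p :=
      (hu.contDiffAt.comp p (hSfst.prodMk contDiffAt_snd)).add
        (hq.contDiffAt.comp p hSfst)
    have h1 : ∀ᶠ p' : ℝ × ℝ in nhds p, T (S p'.1) = p'.1 :=
      Filter.Tendsto.eventually continuousAt_fst hSr
    have heq : (fun p' : ℝ × ℝ => v p'.1 p'.2)
        =ᶠ[nhds p] fun p' : ℝ × ℝ => u (S p'.1) p'.2 + f (S p'.1) / g (S p'.1) := by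
      filter_upwards [h1] with p' hp'
      have hvv := hv (S p'.1) p'.2
      rw [hp'] at hvv
      exact hvv
    exact (hcd.congr_of_eventuallyEq heq).contDiffWithinAt
  · -- the transformed PDE
    intro t x
    obtain ⟨S, hS0, hSr, hS', hScd⟩ := key t
    -- time derivative of v
    have hut' : HasDerivAt (fun s => u s x) (partialT u t x) t := by
      simpa [partialT] using (((hux x).differentiable top1) t).hasDerivAt
    have hq' : HasDerivAt (fun s => f s / g s) (deriv (fun s => f s / g s) t) t :=
      ((hq.differentiable top1) t).hasDerivAt
    have hw : HasDerivAt (fun s => u s x + f s / g s)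
        (partialT u t x + deriv (fun s => f s / g s) t) t := hut'.add hq'
    have hcomp : HasDerivAt (fun τ => u (S τ) x + f (S τ) / g (S τ))
        ((partialT u t x + deriv (fun s => f s / g s) t) * (g t)⁻¹) (T t) := by
      have h2 : HasDerivAt (fun s => u s x + f s / g s)
          (partialT u t x + deriv (fun s => f s / g s) t) (S (T t)) := by
        rw [hS0]; exact hw
      simpa [Function.comp_def] using h2.comp (T t) hS'
    have hvt : partialT v (T t) x
        = (partialT u t x + deriv (fun s => f s / g s) t) * (g t)⁻¹ := by
      have heq : (fun τ => v τ x) =ᶠ[nhds (T t)]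
          fun τ => u (S τ) x + f (S τ) / g (S τ) := by
        filter_upwards [hSr] with τ hτ
        have hvv := hv (S τ) x
        rw [hτ] at hvv
        exact hvv
      simp only [partialT]
      rw [heq.deriv_eq, hcomp.deriv, partialT]
    -- mixed third derivative of v
    have hxxc : ContDiff ℝ (⊤ : ℕ∞) (fun s => partialXX u s x) :=
      P2.comp (contDiff_id.prodMk contDiff_const)
    have hxx : HasDerivAt (fun s => partialXX u s x) (partialXXT u t x) t := by
      simpa [partialXXT] using ((hxxc.differentiable top1) t).hasDerivAt
    have hcomp2 : HasDerivAt (fun τ => partialXX u (S τ) x)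
        (partialXXT u t x * (g t)⁻¹) (T t) := by
      have h2 : HasDerivAt (fun s => partialXX u s x) (partialXXT u t x) (S (T t)) := by
        rw [hS0]; exact hxx
      simpa [Function.comp_def] using h2.comp (T t) hS'
    have hvxxt : partialXXT v (T t) x = partialXXT u t x * (g t)⁻¹ := by
      have heq : (fun τ => partialXX v τ x) =ᶠ[nhds (T t)]
          fun τ => partialXX u (S τ) x := by
        filter_upwards [hSr] with τ hτ
        have hvv := hvxx (S τ) x
        rw [hτ] at hvv
        exact hvv
      simp only [partialXXT]
      rw [heq.deriv_eq, hcomp2.deriv, partialXXT]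
    -- assemble
    rw [hvt, hvxx, hvx, hvxxt, hv, hK, hH, hF]
    have h0 := hsol t x
    have hgt : g t ≠ 0 := hg0 t
    field_simp
    linear_combination h0
end

section
/- Let ε, λ, δ, ρ be real constants with ελ ≠ 0, and let s be any real number. If u : {t > 0} × ℝ → ℝ is a smooth solution of u_t + u u_x + λ t^{ρ−1} u_{xx} + ε t^{ρ} u_{xxt} = δ t^{(ρ−4)/2} for t > 0, then the function v(t,x) = e^{(ρ−2)s} u(e^{−2s}t, e^{−ρs}x) is also a smooth solution of the same equation for t > 0. -/
/-- Unconditional chain rule for precomposition with multiplication by a constant. -/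
lemma deriv_comp_const_mul'' (f : ℝ → ℝ) (a x : ℝ) :
    deriv (fun y => f (a * y)) x = a * deriv f (a * x) := by
  rcases eq_or_ne a 0 with rfl | ha
  · simp
  by_cases hf : DifferentiableAt ℝ f (a * x)
  · have h1 : HasDerivAt (fun y : ℝ => a * y) a x := by
      simpa using (hasDerivAt_id x).const_mul a
    simpa [mul_comm, Function.comp_def] using (hf.hasDerivAt.comp x h1).deriv
  · rw [deriv_zero_of_not_differentiableAt hf, deriv_zero_of_not_differentiableAt, mul_zero]
    intro h
    apply hf
    have hg : DifferentiableAt ℝ (fun z : ℝ => a⁻¹ * z) (a * x) :=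
      differentiableAt_id.const_mul _
    have h' : DifferentiableAt ℝ (fun y => f (a * y)) ((fun z : ℝ => a⁻¹ * z) (a * x)) := by
      simpa [inv_mul_cancel_left₀ ha] using h
    have h2 := DifferentiableAt.comp (a * x) h' hg
    simpa only [Function.comp_def, mul_inv_cancel_left₀ ha] using h2

/-- the one-parameter Lie symmetry group
`(t,x,u) ↦ (e^{2s}t, e^{ρs}x, e^{(ρ-2)s}u)` of the equation
`u_t + u u_x + λ t^{ρ-1} u_xx + ε t^ρ u_xxt = δ t^{(ρ-4)/2}` (for `t > 0`)
maps solutions to solutions. -/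
theorem stmt_4 (ε lam δ ρ s : ℝ) (hεlam : ε * lam ≠ 0)
    (u : ℝ → ℝ → ℝ)
    (hu : ContDiffOn ℝ (⊤ : ℕ∞) (fun p : ℝ × ℝ => u p.1 p.2) (Set.Ioi 0 ×ˢ Set.univ))
    (hsol : ∀ t, 0 < t → ∀ x, partialT u t x + u t x * partialX u t x
      + lam * t ^ (ρ - 1) * partialXX u t x + ε * t ^ ρ * partialXXT u t x
      = δ * t ^ ((ρ - 4) / 2))
    (v : ℝ → ℝ → ℝ)
    (hv : ∀ t x, v t x
      = Real.exp ((ρ - 2) * s) * u (Real.exp (-2 * s) * t) (Real.exp (-ρ * s) * x)) :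
    ContDiffOn ℝ (⊤ : ℕ∞) (fun p : ℝ × ℝ => v p.1 p.2) (Set.Ioi 0 ×ˢ Set.univ) ∧
    ∀ t, 0 < t → ∀ x, partialT v t x + v t x * partialX v t x
      + lam * t ^ (ρ - 1) * partialXX v t x + ε * t ^ ρ * partialXXT v t x
      = δ * t ^ ((ρ - 4) / 2) := by
  set A : ℝ := Real.exp (-2 * s) with hA
  set B : ℝ := Real.exp (-ρ * s) with hB
  set C : ℝ := Real.exp ((ρ - 2) * s) with hC
  have hApos : 0 < A := Real.exp_pos _
  have hBpos : 0 < B := Real.exp_pos _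
  have hApow : ∀ e : ℝ, A ^ e = Real.exp (-2 * s * e) := fun e => by
    rw [hA, ← Real.exp_mul]
  -- first-order identities, valid for all t, x
  have hvX : ∀ t x, partialX v t x = C * B * partialX u (A * t) (B * x) := by
    intro t x
    have : (fun y => v t y) = fun y => C * u (A * t) (B * y) := funext fun y => hv t y
    rw [partialX, this, deriv_const_mul_field,
      deriv_comp_const_mul'' (fun y => u (A * t) y) B x, partialX, mul_assoc]
  have hvT : ∀ t x, partialT v t x = C * A * partialT u (A * t) (B * x) := by
    intro t x
    have : (fun τ => v τ x) = fun τ => C * u (A * τ) (B * x) := funext fun τ => hv τ x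
    rw [partialT, this, deriv_const_mul_field,
      deriv_comp_const_mul'' (fun τ => u τ (B * x)) A t, partialT, mul_assoc]
  have hvXX : ∀ t x, partialXX v t x = C * B ^ 2 * partialXX u (A * t) (B * x) := by
    intro t x
    have : (fun y => partialX v t y) = fun y => C * B * partialX u (A * t) (B * y) :=
      funext fun y => hvX t y
    rw [partialXX, this, deriv_const_mul_field,
      deriv_comp_const_mul'' (fun y => partialX u (A * t) y) B x, partialXX]
    ring
  have hvXXT : ∀ t x, partialXXT v t x = C * B ^ 2 * A * partialXXT u (A * t) (B * x) := by
    intro t x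
    have : (fun τ => partialXX v τ x) = fun τ => C * B ^ 2 * partialXX u (A * τ) (B * x) :=
      funext fun τ => hvXX τ x
    rw [partialXXT, this, deriv_const_mul_field,
      deriv_comp_const_mul'' (fun τ => partialXX u τ (B * x)) A t, partialXXT]
    ring
  constructor
  · have hveq : (fun p : ℝ × ℝ => v p.1 p.2)
        = fun p : ℝ × ℝ => C * u (A * p.1) (B * p.2) := funext fun p => hv p.1 p.2
    rw [hveq]
    have hg : ContDiff ℝ (⊤ : ℕ∞) (fun p : ℝ × ℝ => (A * p.1, B * p.2)) :=
      ContDiff.prodMk (contDiff_const.mul contDiff_fst) (contDiff_const.mul contDiff_snd)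
    have hmaps : Set.MapsTo (fun p : ℝ × ℝ => (A * p.1, B * p.2))
        (Set.Ioi 0 ×ˢ Set.univ) (Set.Ioi 0 ×ˢ Set.univ) := by
      rintro ⟨t, x⟩ ⟨ht, -⟩
      exact ⟨mul_pos hApos ht, Set.mem_univ _⟩
    exact contDiffOn_const.mul (hu.comp hg.contDiffOn hmaps)
  · intro t ht x
    have hAt : 0 < A * t := mul_pos hApos ht
    have H := hsol (A * t) hAt (B * x)
    rw [Real.mul_rpow hApos.le ht.le, Real.mul_rpow hApos.le ht.le,
      Real.mul_rpow hApos.le ht.le, hApow, hApow, hApow] at H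
    rw [hvT, hvX, hvXX, hvXXT, hv]
    have E1 : C * B = A := by
      rw [hA, hB, hC, ← Real.exp_add]; congr 1; ring
    have E2 : B ^ 2 = A * Real.exp (-2 * s * (ρ - 1)) := by
      rw [hA, hB, sq, ← Real.exp_add, ← Real.exp_add]; congr 1; ring
    have E3 : B ^ 2 = Real.exp (-2 * s * ρ) := by
      rw [hB, sq, ← Real.exp_add]; congr 1; ring
    have E4 : C * A * Real.exp (-2 * s * ((ρ - 4) / 2)) = 1 := by
      rw [hA, hC, ← Real.exp_add, ← Real.exp_add, Real.exp_eq_one_iff]; ring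
    linear_combination (C * A) * H
      + (C * u (A * t) (B * x) * partialX u (A * t) (B * x)) * E1
      + (lam * t ^ (ρ - 1) * partialXX u (A * t) (B * x) * C) * E2
      + (ε * t ^ ρ * partialXXT u (A * t) (B * x) * C * A) * E3
      + (δ * t ^ ((ρ - 4) / 2)) * E4
end

section
/- Let ε, λ, δ be real constants with ελ ≠ 0, and let s be any real number. If u : ℝ × ℝ → ℝ is a smooth solution of u_t + u u_x + λ e^{t} u_{xx} + ε e^{t} u_{xxt} = δ e^{t/2}, then the function v(t,x) = e^{s} u(t − 2s, e^{−s}x) is also a smooth solution of the same equation. -/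
private lemma lemA (F : ℝ × ℝ → ℝ) (hF : ContDiff ℝ (⊤ : ℕ∞) F) (t x : ℝ) :
    HasDerivAt (fun y => F (t, y)) (fderiv ℝ F (t, x) (0, 1)) x := by
  have h2 : HasDerivAt (fun y : ℝ => ((t, y) : ℝ × ℝ)) ((0 : ℝ), (1 : ℝ)) x :=
    (hasDerivAt_const x t).prodMk (hasDerivAt_id x)
  exact (hF.differentiable (by simp) (t, x)).hasFDerivAt.comp_hasDerivAt x h2

private lemma lemB (F : ℝ × ℝ → ℝ) (hF : ContDiff ℝ (⊤ : ℕ∞) F) (t x : ℝ) :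
    HasDerivAt (fun τ => F (τ, x)) (fderiv ℝ F (t, x) (1, 0)) t := by
  have h2 : HasDerivAt (fun τ : ℝ => ((τ, x) : ℝ × ℝ)) ((1 : ℝ), (0 : ℝ)) t :=
    (hasDerivAt_id t).prodMk (hasDerivAt_const t x)
  exact (hF.differentiable (by simp) (t, x)).hasFDerivAt.comp_hasDerivAt t h2

private lemma lemC (F : ℝ × ℝ → ℝ) (hF : ContDiff ℝ (⊤ : ℕ∞) F) (w : ℝ × ℝ) :
    ContDiff ℝ (⊤ : ℕ∞) (fun p => fderiv ℝ F p w) :=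
  (hF.fderiv_right (by exact_mod_cast le_top)).clm_apply contDiff_const

/-- the one-parameter Lie symmetry group
`(t,x,u) ↦ (t + 2s, e^{s}x, e^{s}u)` of the equation
`u_t + u u_x + λ e^t u_xx + ε e^t u_xxt = δ e^{t/2}` maps solutions to solutions. -/
theorem stmt_5 (ε lam δ s : ℝ) (hεlam : ε * lam ≠ 0)
    (u : ℝ → ℝ → ℝ)
    (hu : ContDiff ℝ (⊤ : ℕ∞) (fun p : ℝ × ℝ => u p.1 p.2))
    (hsol : ∀ t x, partialT u t x + u t x * partialX u t x
      + lam * Real.exp t * partialXX u t x + ε * Real.exp t * partialXXT u t x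
      = δ * Real.exp (t / 2))
    (v : ℝ → ℝ → ℝ)
    (hv : ∀ t x, v t x = Real.exp s * u (t - 2 * s) (Real.exp (-s) * x)) :
    ContDiff ℝ (⊤ : ℕ∞) (fun p : ℝ × ℝ => v p.1 p.2) ∧
    ∀ t x, partialT v t x + v t x * partialX v t x
      + lam * Real.exp t * partialXX v t x + ε * Real.exp t * partialXXT v t x
      = δ * Real.exp (t / 2) := by
  have hc : Real.exp s * Real.exp (-s) = 1 := by
    rw [← Real.exp_add]; simp
  set F : ℝ × ℝ → ℝ := fun p => u p.1 p.2 with hFdef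
  set G1 : ℝ × ℝ → ℝ := fun p => fderiv ℝ F p (0, 1) with hG1def
  have hG1 : ContDiff ℝ (⊤ : ℕ∞) G1 := lemC F hu _
  set G2 : ℝ × ℝ → ℝ := fun p => fderiv ℝ G1 p (0, 1) with hG2def
  have hG2 : ContDiff ℝ (⊤ : ℕ∞) G2 := lemC G1 hG1 _
  set G3 : ℝ × ℝ → ℝ := fun p => fderiv ℝ G2 p (1, 0) with hG3def
  -- partials of u in terms of G's
  have hux : ∀ t x, partialX u t x = G1 (t, x) := fun t x => (lemA F hu t x).deriv
  have huxx : ∀ t x, partialXX u t x = G2 (t, x) := by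
    intro t x
    unfold partialXX
    simp only [hux]
    exact (lemA G1 hG1 t x).deriv
  have huxxt : ∀ t x, partialXXT u t x = G3 (t, x) := by
    intro t x
    unfold partialXXT
    simp only [huxx]
    exact (lemB G2 hG2 t x).deriv
  have hut : ∀ t x, partialT u t x = fderiv ℝ F (t, x) (1, 0) := fun t x => (lemB F hu t x).deriv
  -- partials of v
  have hvx : ∀ t x, partialX v t x = partialX u (t - 2 * s) (Real.exp (-s) * x) := by
    intro t x
    have h := ((lemA F hu (t - 2 * s) (Real.exp (-s) * x)).comp x
      ((hasDerivAt_id x).const_mul (Real.exp (-s)))).const_mul (Real.exp s)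
    have h2 : partialX v t x = Real.exp s * (G1 (t - 2 * s, Real.exp (-s) * x)
        * (Real.exp (-s) * 1)) := by
      unfold partialX
      have he : (fun y => v t y) = (fun y => Real.exp s * u (t - 2 * s) (Real.exp (-s) * y)) :=
        funext fun y => hv t y
      rw [he]
      exact h.deriv
    rw [h2, hux]
    linear_combination (G1 (t - 2 * s, Real.exp (-s) * x)) * hc
  have hvxx : ∀ t x, partialXX v t x
      = Real.exp (-s) * partialXX u (t - 2 * s) (Real.exp (-s) * x) := by
    intro t x
    have h := (lemA G1 hG1 (t - 2 * s) (Real.exp (-s) * x)).comp x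
      ((hasDerivAt_id x).const_mul (Real.exp (-s)))
    have h2 : partialXX v t x = G2 (t - 2 * s, Real.exp (-s) * x) * (Real.exp (-s) * 1) := by
      unfold partialXX
      have he : (fun y => partialX v t y)
          = (fun y => G1 (t - 2 * s, Real.exp (-s) * y)) := by
        funext y; rw [hvx, hux]
      rw [he]
      exact h.deriv
    rw [h2, huxx]; ring
  have hvxxt : ∀ t x, partialXXT v t x
      = Real.exp (-s) * partialXXT u (t - 2 * s) (Real.exp (-s) * x) := by
    intro t x
    have h := ((lemB G2 hG2 (t - 2 * s) (Real.exp (-s) * x)).comp t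
      ((hasDerivAt_id t).sub_const (2 * s))).const_mul (Real.exp (-s))
    have h2 : partialXXT v t x = Real.exp (-s)
        * (G3 (t - 2 * s, Real.exp (-s) * x) * 1) := by
      unfold partialXXT
      have he : (fun τ => partialXX v τ x)
          = (fun τ => Real.exp (-s) * G2 (τ - 2 * s, Real.exp (-s) * x)) := by
        funext τ; rw [hvxx, huxx]
      rw [he]
      exact h.deriv
    rw [h2, huxxt]; ring
  have hvt : ∀ t x, partialT v t x
      = Real.exp s * partialT u (t - 2 * s) (Real.exp (-s) * x) := by
    intro t x
    have h := ((lemB F hu (t - 2 * s) (Real.exp (-s) * x)).comp t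
      ((hasDerivAt_id t).sub_const (2 * s))).const_mul (Real.exp s)
    have h2 : partialT v t x = Real.exp s
        * (fderiv ℝ F (t - 2 * s, Real.exp (-s) * x) (1, 0) * 1) := by
      unfold partialT
      have he : (fun τ => v τ x)
          = (fun τ => Real.exp s * u (τ - 2 * s) (Real.exp (-s) * x)) :=
        funext fun τ => hv τ x
      rw [he]
      exact h.deriv
    rw [h2, hut]; ring
  constructor
  · have : (fun p : ℝ × ℝ => v p.1 p.2)
        = (fun p : ℝ × ℝ => Real.exp s * F (p.1 - 2 * s, Real.exp (-s) * p.2)) := by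
      funext p; exact hv p.1 p.2
    rw [this]
    exact (hu.comp (((contDiff_fst.sub contDiff_const)).prodMk
      (contDiff_const.mul contDiff_snd))).const_smul (Real.exp s)
  · intro t x
    have key := hsol (t - 2 * s) (Real.exp (-s) * x)
    have e2 : Real.exp t * Real.exp (-s) = Real.exp s * Real.exp (t - 2 * s) := by
      rw [← Real.exp_add, ← Real.exp_add]; ring_nf
    have e3 : Real.exp (t / 2) = Real.exp s * Real.exp ((t - 2 * s) / 2) := by
      rw [← Real.exp_add]; ring_nf
    rw [hvt, hvx, hvxx, hvxxt, hv]
    linear_combination Real.exp s * key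
      + (lam * partialXX u (t - 2 * s) (Real.exp (-s) * x)
         + ε * partialXXT u (t - 2 * s) (Real.exp (-s) * x)) * e2 - δ * e3
end

section
/- Let ε, λ, δ be real constants with ελ ≠ 0, and let s be any real number. If u : {t > 0} × ℝ → ℝ is a smooth solution of u_t + δ(ln t)u_x + u u_x + λ t u_{xx} + ε t² u_{xxt} = 0 for t > 0, then the function v(t,x) = u(e^{−s}t, e^{−s}x) − δs is also a smooth solution of the same equation for t > 0. -/
/-- Chain rule helper: a differentiable two-variable function composed with a
curve `y ↦ (g₁ y, g₂ y)`. -/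
lemma hasDerivAt_comp2 (f : ℝ × ℝ → ℝ) {p : ℝ × ℝ}
    (hf : DifferentiableAt ℝ f p) {g₁ g₂ : ℝ → ℝ} {z d₁ d₂ : ℝ}
    (h₁ : HasDerivAt g₁ d₁ z) (h₂ : HasDerivAt g₂ d₂ z)
    (hp : (g₁ z, g₂ z) = p) :
    HasDerivAt (fun y => f (g₁ y, g₂ y)) (fderiv ℝ f p (d₁, d₂)) z := by
  subst hp
  exact hf.hasFDerivAt.comp_hasDerivAt z (h₁.prodMk h₂)

/-- the one-parameter Lie symmetry group
`(t,x,u) ↦ (e^{s}t, e^{s}x, u - δs)` of the equation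
`u_t + δ(ln t)u_x + u u_x + λ t u_xx + ε t² u_xxt = 0` (for `t > 0`)
maps solutions to solutions. -/
theorem stmt_6 (ε lam δ s : ℝ) (hεlam : ε * lam ≠ 0)
    (u : ℝ → ℝ → ℝ)
    (hu : ContDiffOn ℝ (⊤ : ℕ∞) (fun p : ℝ × ℝ => u p.1 p.2) (Set.Ioi 0 ×ˢ Set.univ))
    (hsol : ∀ t, 0 < t → ∀ x, partialT u t x + δ * Real.log t * partialX u t x
      + u t x * partialX u t x + lam * t * partialXX u t x
      + ε * t ^ 2 * partialXXT u t x = 0)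
    (v : ℝ → ℝ → ℝ)
    (hv : ∀ t x, v t x = u (Real.exp (-s) * t) (Real.exp (-s) * x) - δ * s) :
    ContDiffOn ℝ (⊤ : ℕ∞) (fun p : ℝ × ℝ => v p.1 p.2) (Set.Ioi 0 ×ˢ Set.univ) ∧
    ∀ t, 0 < t → ∀ x, partialT v t x + δ * Real.log t * partialX v t x
      + v t x * partialX v t x + lam * t * partialXX v t x
      + ε * t ^ 2 * partialXXT v t x = 0 := by
  set c : ℝ := Real.exp (-s) with hc_def
  have hc : 0 < c := Real.exp_pos _
  set Ω : Set (ℝ × ℝ) := Set.Ioi 0 ×ˢ Set.univ with hΩ_def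
  have hΩ : IsOpen Ω := isOpen_Ioi.prod isOpen_univ
  have hmem : ∀ t x : ℝ, 0 < t → ((t, x) : ℝ × ℝ) ∈ Ω := by
    intro t x ht; exact ⟨ht, Set.mem_univ x⟩
  set F : ℝ × ℝ → ℝ := fun p => u p.1 p.2 with hF_def
  have hF : ContDiffOn ℝ (⊤ : ℕ∞) F Ω := hu
  -- differentiability extractor
  have hdiff : ∀ (f : ℝ × ℝ → ℝ), ContDiffOn ℝ (⊤ : ℕ∞) f Ω →
      ∀ {t x : ℝ}, 0 < t → DifferentiableAt ℝ f (t, x) := by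
    intro f hf t x ht
    exact (hf.contDiffAt (hΩ.mem_nhds (hmem t x ht))).differentiableAt (by simp)
  set Fx : ℝ × ℝ → ℝ := fun p => fderiv ℝ F p (0, 1) with hFx_def
  have hFx : ContDiffOn ℝ (⊤ : ℕ∞) Fx Ω :=
    (hF.fderiv_of_isOpen hΩ (by exact_mod_cast le_top)).clm_apply contDiffOn_const
  set Fxx : ℝ × ℝ → ℝ := fun p => fderiv ℝ Fx p (0, 1) with hFxx_def
  have hFxx : ContDiffOn ℝ (⊤ : ℕ∞) Fxx Ω :=
    (hFx.fderiv_of_isOpen hΩ (by exact_mod_cast le_top)).clm_apply contDiffOn_const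
  have hsmul : ∀ (L : ℝ × ℝ →L[ℝ] ℝ) (a b : ℝ), L (c * a, c * b) = c * L (a, b) := by
    intro L a b
    have h1 : ((c * a, c * b) : ℝ × ℝ) = c • ((a, b) : ℝ × ℝ) := by
      simp [Prod.smul_mk, smul_eq_mul]
    rw [h1, L.map_smul, smul_eq_mul]
  have hlin : ∀ z : ℝ, HasDerivAt (fun y : ℝ => c * y) c z := by
    intro z
    simpa using (hasDerivAt_id z).const_mul c
  -- identification of partial derivatives of u
  have hpx : ∀ t x : ℝ, 0 < t → partialX u t x = Fx (t, x) := by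
    intro t x ht
    exact (hasDerivAt_comp2 F (hdiff F hF ht) (hasDerivAt_const x t)
      (hasDerivAt_id x) rfl).deriv
  have hpt : ∀ t x : ℝ, 0 < t → partialT u t x = fderiv ℝ F (t, x) (1, 0) := by
    intro t x ht
    exact (hasDerivAt_comp2 F (hdiff F hF ht) (hasDerivAt_id t)
      (hasDerivAt_const t x) rfl).deriv
  have hpxx : ∀ t x : ℝ, 0 < t → partialXX u t x = Fxx (t, x) := by
    intro t x ht
    have heq : (fun y => partialX u t y) = fun y => Fx (t, y) :=
      funext fun y => hpx t y ht
    rw [partialXX, heq]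
    exact (hasDerivAt_comp2 Fx (hdiff Fx hFx ht) (hasDerivAt_const x t)
      (hasDerivAt_id x) rfl).deriv
  have hpxxt : ∀ t x : ℝ, 0 < t → partialXXT u t x = fderiv ℝ Fxx (t, x) (1, 0) := by
    intro t x ht
    have hev : (fun τ => partialXX u τ x) =ᶠ[nhds t] fun τ => Fxx (τ, x) := by
      filter_upwards [eventually_gt_nhds ht] with τ hτ using hpxx τ x hτ
    rw [partialXXT, hev.deriv_eq]
    exact (hasDerivAt_comp2 Fxx (hdiff Fxx hFxx ht) (hasDerivAt_id t)
      (hasDerivAt_const t x) rfl).deriv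
  -- partial derivatives of v
  have hvT : ∀ t x : ℝ, 0 < t → partialT v t x = c * partialT u (c * t) (c * x) := by
    intro t x ht
    have hT : 0 < c * t := mul_pos hc ht
    have heq : (fun τ => v τ x) = fun τ => F (c * τ, c * x) - δ * s :=
      funext fun τ => hv τ x
    rw [partialT, heq]
    have h := ((hasDerivAt_comp2 F (hdiff F hF hT) (hlin t)
      (hasDerivAt_const t (c * x)) rfl).sub_const (δ * s)).deriv
    rw [h, hpt (c * t) (c * x) hT]
    rw [show ((c : ℝ), (0 : ℝ)) = (c * 1, c * 0) by norm_num, hsmul]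
  have hvX : ∀ t x : ℝ, 0 < t → partialX v t x = c * Fx (c * t, c * x) := by
    intro t x ht
    have hT : 0 < c * t := mul_pos hc ht
    have heq : (fun y => v t y) = fun y => F (c * t, c * y) - δ * s :=
      funext fun y => hv t y
    rw [partialX, heq]
    have h := ((hasDerivAt_comp2 F (hdiff F hF hT) (hasDerivAt_const x (c * t))
      (hlin x)) rfl).sub_const (δ * s)
    rw [h.deriv]
    rw [show ((0 : ℝ), (c : ℝ)) = (c * 0, c * 1) by norm_num, hsmul]
  have hvXX : ∀ t x : ℝ, 0 < t →
      partialXX v t x = c * (c * Fxx (c * t, c * x)) := by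
    intro t x ht
    have hT : 0 < c * t := mul_pos hc ht
    have heq : (fun y => partialX v t y) = fun y => c * Fx (c * t, c * y) :=
      funext fun y => hvX t y ht
    rw [partialXX, heq]
    have h := ((hasDerivAt_comp2 Fx (hdiff Fx hFx hT) (hasDerivAt_const x (c * t))
      (hlin x)) rfl).const_mul c
    rw [h.deriv]
    rw [show ((0 : ℝ), (c : ℝ)) = (c * 0, c * 1) by norm_num, hsmul]
  have hvXXT : ∀ t x : ℝ, 0 < t →
      partialXXT v t x = c * (c * (c * partialXXT u (c * t) (c * x))) := by
    intro t x ht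
    have hT : 0 < c * t := mul_pos hc ht
    have hev : (fun τ => partialXX v τ x) =ᶠ[nhds t]
        fun τ => c * (c * Fxx (c * τ, c * x)) := by
      filter_upwards [eventually_gt_nhds ht] with τ hτ using hvXX τ x hτ
    rw [partialXXT, hev.deriv_eq]
    have h := (((hasDerivAt_comp2 Fxx (hdiff Fxx hFxx hT) (hlin t)
      (hasDerivAt_const t (c * x))) rfl).const_mul c).const_mul c
    rw [h.deriv, hpxxt (c * t) (c * x) hT]
    rw [show ((c : ℝ), (0 : ℝ)) = (c * 1, c * 0) by norm_num, hsmul]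
  constructor
  · -- smoothness of v
    have hfun : (fun p : ℝ × ℝ => v p.1 p.2)
        = fun p : ℝ × ℝ => F (c * p.1, c * p.2) - δ * s :=
      funext fun p => hv p.1 p.2
    rw [hfun]
    have hmaps : Set.MapsTo (fun p : ℝ × ℝ => ((c * p.1, c * p.2) : ℝ × ℝ)) Ω Ω := by
      intro p hp
      exact ⟨mul_pos hc hp.1, Set.mem_univ _⟩
    have hsc : ContDiff ℝ (⊤ : ℕ∞) (fun p : ℝ × ℝ => ((c * p.1, c * p.2) : ℝ × ℝ)) :=
      (contDiff_const.mul contDiff_fst).prodMk (contDiff_const.mul contDiff_snd)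
    have h1 : ContDiffOn ℝ (⊤ : ℕ∞)
        (F ∘ fun p : ℝ × ℝ => ((c * p.1, c * p.2) : ℝ × ℝ)) Ω :=
      hF.comp hsc.contDiffOn hmaps
    have h2 := h1.sub (contDiffOn_const (c := δ * s))
    simpa [Function.comp] using h2
  · intro t ht x
    have hT : 0 < c * t := mul_pos hc ht
    have hsol' := hsol (c * t) hT (c * x)
    have hlog : Real.log (c * t) = -s + Real.log t := by
      rw [Real.log_mul (ne_of_gt hc) (ne_of_gt ht), hc_def, Real.log_exp]
    rw [hlog] at hsol'
    rw [hvT t x ht, hvX t x ht, hvXX t x ht, hvXXT t x ht, hv t x,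
      ← hpx (c * t) (c * x) hT, ← hpxx (c * t) (c * x) hT]
    linear_combination c * hsol'
end

section
/- Let ε, λ, δ be real constants with ελ ≠ 0, and let s be any real number. If u : ℝ × ℝ → ℝ is a smooth solution of u_t + δt·u_x + u u_x + λ u_{xx} + ε u_{xxt} = 0, then the function v(t,x) = u(t − s, x) − δs is also a smooth solution of the same equation. -/
/-- the one-parameter Lie symmetry group
`(t,x,u) ↦ (t + s, x, u - δs)` of the equation
`u_t + δt u_x + u u_x + λ u_xx + ε u_xxt = 0` maps solutions to solutions. -/
theorem stmt_7 (ε lam δ s : ℝ) (hεlam : ε * lam ≠ 0)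
    (u : ℝ → ℝ → ℝ)
    (hu : ContDiff ℝ (⊤ : ℕ∞) (fun p : ℝ × ℝ => u p.1 p.2))
    (hsol : ∀ t x, partialT u t x + δ * t * partialX u t x
      + u t x * partialX u t x + lam * partialXX u t x + ε * partialXXT u t x = 0)
    (v : ℝ → ℝ → ℝ)
    (hv : ∀ t x, v t x = u (t - s) x - δ * s) :
    ContDiff ℝ (⊤ : ℕ∞) (fun p : ℝ × ℝ => v p.1 p.2) ∧
    ∀ t x, partialT v t x + δ * t * partialX v t x
      + v t x * partialX v t x + lam * partialXX v t x + ε * partialXXT v t x = 0 := by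
  have hX : ∀ t x, partialX v t x = partialX u (t - s) x := by
    intro t x
    unfold partialX
    have : (fun y => v t y) = fun y => u (t - s) y - δ * s := by
      funext y; exact hv t y
    rw [this, deriv_sub_const]
  have hXX : ∀ t x, partialXX v t x = partialXX u (t - s) x := by
    intro t x
    unfold partialXX
    congr 1
    funext y; exact hX t y
  have hT : ∀ t x, partialT v t x = partialT u (t - s) x := by
    intro t x
    unfold partialT
    have : (fun r => v r x) = fun r => (fun r => u r x) (r - s) - δ * s := by
      funext r; exact hv r x
    rw [this, deriv_sub_const]; exact deriv_comp_sub_const (fun r => u r x) s t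
  have hXXT : ∀ t x, partialXXT v t x = partialXXT u (t - s) x := by
    intro t x
    unfold partialXXT
    have : (fun r => partialXX v r x) = fun r => (fun r => partialXX u r x) (r - s) := by
      funext r; exact hXX r x
    rw [this]; exact deriv_comp_sub_const (fun r => partialXX u r x) s t
  constructor
  · have : (fun p : ℝ × ℝ => v p.1 p.2)
        = (fun p : ℝ × ℝ => u p.1 p.2) ∘ (fun p : ℝ × ℝ => (p.1 - s, p.2)) - fun _ => δ * s := by
      funext p; simp [hv]
    rw [this]
    exact (hu.comp (ContDiff.prodMk (contDiff_fst.sub contDiff_const) contDiff_snd)).sub contDiff_const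
  · intro t x
    rw [hT, hX, hXX, hXXT, hv]
    have := hsol (t - s) x
    nlinarith [this]
end

section
/- Let ε, λ, δ, ρ be real constants with ελρ ≠ 0, and let φ : ℝ → ℝ be a smooth solution of the ODE ερ ω φ''' + (ε(ρ+2) − 2λ)φ'' − 2φφ' + ρωφ' + (2−ρ)φ + 2δ = 0 (in the variable ω). Then the function u(t,x) = t^{ρ/2 − 1} φ(x t^{−ρ/2}) is a smooth solution of u_t + u u_x + λ t^{ρ−1} u_{xx} + ε t^{ρ} u_{xxt} = δ t^{(ρ−4)/2} on the domain t > 0. -/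
/-- the ansatz `u = t^{ρ/2-1} φ(x t^{-ρ/2})` turns any smooth solution of
the reduced ODE `ερω φ''' + (ε(ρ+2) - 2λ)φ'' - 2φφ' + ρωφ' + (2-ρ)φ + 2δ = 0` into a
smooth solution of `u_t + u u_x + λ t^{ρ-1} u_xx + ε t^ρ u_xxt = δ t^{(ρ-4)/2}` on `t > 0`. -/
theorem stmt_8 (ε lam δ ρ : ℝ) (h : ε * lam * ρ ≠ 0)
    (φ : ℝ → ℝ) (hφ : ContDiff ℝ (⊤ : ℕ∞) φ)
    (hode : ∀ ω, ε * ρ * ω * iteratedDeriv 3 φ ω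
      + (ε * (ρ + 2) - 2 * lam) * iteratedDeriv 2 φ ω
      - 2 * φ ω * deriv φ ω + ρ * ω * deriv φ ω + (2 - ρ) * φ ω + 2 * δ = 0)
    (u : ℝ → ℝ → ℝ)
    (hu : ∀ t x, u t x = t ^ (ρ / 2 - 1) * φ (x * t ^ (-ρ / 2))) :
    ContDiffOn ℝ (⊤ : ℕ∞) (fun p : ℝ × ℝ => u p.1 p.2) (Set.Ioi 0 ×ˢ Set.univ) ∧
    ∀ t, 0 < t → ∀ x, partialT u t x + u t x * partialX u t x
      + lam * t ^ (ρ - 1) * partialXX u t x + ε * t ^ ρ * partialXXT u t x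
      = δ * t ^ ((ρ - 4) / 2) := by
  set φ1 := deriv φ with hφ1def
  set φ2 := deriv φ1 with hφ2def
  set φ3 := deriv φ2 with hφ3def
  have hφ1 : ContDiff ℝ (⊤ : ℕ∞) φ1 := (contDiff_infty_iff_deriv.mp hφ).2
  have hφ2 : ContDiff ℝ (⊤ : ℕ∞) φ2 := (contDiff_infty_iff_deriv.mp hφ1).2
  have hφd : ∀ z, HasDerivAt φ (φ1 z) z := fun z =>
    ((hφ.differentiable (by simp)) z).hasDerivAt
  have hφ1d : ∀ z, HasDerivAt φ1 (φ2 z) z := fun z =>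
    ((hφ1.differentiable (by simp)) z).hasDerivAt
  have hφ2d : ∀ z, HasDerivAt φ2 (φ3 z) z := fun z =>
    ((hφ2.differentiable (by simp)) z).hasDerivAt
  have i2 : iteratedDeriv 2 φ = φ2 := by
    rw [show (2:ℕ) = 1 + 1 from rfl, iteratedDeriv_succ, iteratedDeriv_one]
  have i3 : iteratedDeriv 3 φ = φ3 := by
    rw [show (3:ℕ) = 2 + 1 from rfl, iteratedDeriv_succ, i2]
  constructor
  · intro p hp
    have hp1 : (0:ℝ) < p.1 := hp.1
    apply ContDiffAt.contDiffWithinAt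
    have heq : (fun p : ℝ × ℝ => u p.1 p.2)
        = fun p : ℝ × ℝ => p.1 ^ (ρ / 2 - 1) * φ (p.2 * p.1 ^ (-ρ / 2)) := by
      funext q; exact hu q.1 q.2
    rw [heq]
    have h1 : ContDiffAt ℝ (⊤ : ℕ∞) (fun q : ℝ × ℝ => q.1 ^ (ρ / 2 - 1)) p :=
      (Real.contDiffAt_rpow_const_of_ne (p := ρ/2-1) hp1.ne').comp p contDiffAt_fst
    have h2 : ContDiffAt ℝ (⊤ : ℕ∞) (fun q : ℝ × ℝ => q.2 * q.1 ^ (-ρ / 2)) p :=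
      contDiffAt_snd.mul
        ((Real.contDiffAt_rpow_const_of_ne (p := -ρ/2) hp1.ne').comp p contDiffAt_fst)
    exact h1.mul (hφ.contDiffAt.comp p h2)
  · intro t ht x
    have htne : t ≠ 0 := ht.ne'
    -- spatial first derivative formula, for all t' > 0 and all x'
    have hX : ∀ t' : ℝ, t' ≠ 0 → ∀ x' : ℝ,
        HasDerivAt (fun y => u t' y)
          (t' ^ (ρ / 2 - 1) * (φ1 (x' * t' ^ (-ρ / 2)) * t' ^ (-ρ / 2))) x' := by
      intro t' ht' x'
      have heq : (fun y => u t' y) = fun y => t' ^ (ρ / 2 - 1) * φ (y * t' ^ (-ρ / 2)) := by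
        funext y; exact hu t' y
      rw [heq]
      have hin : HasDerivAt (fun y : ℝ => y * t' ^ (-ρ / 2)) (t' ^ (-ρ / 2)) x' := by
        simpa using (hasDerivAt_id x').mul_const (t' ^ (-ρ / 2))
      exact (((hφd (x' * t' ^ (-ρ / 2))).comp x' hin)).const_mul _
    have hpX : ∀ t' : ℝ, t' ≠ 0 → ∀ x' : ℝ, partialX u t' x'
        = t' ^ (ρ / 2 - 1) * (φ1 (x' * t' ^ (-ρ / 2)) * t' ^ (-ρ / 2)) := by
      intro t' ht' x'; exact (hX t' ht' x').deriv
    -- second spatial derivative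
    have hpXX : ∀ t' : ℝ, t' ≠ 0 → ∀ x' : ℝ, partialXX u t' x'
        = t' ^ (ρ / 2 - 1) * t' ^ (-ρ / 2) * t' ^ (-ρ / 2) * φ2 (x' * t' ^ (-ρ / 2)) := by
      intro t' ht' x'
      have heq : (fun y => partialX u t' y)
          = fun y => (t' ^ (ρ / 2 - 1) * t' ^ (-ρ / 2)) * φ1 (y * t' ^ (-ρ / 2)) := by
        funext y; rw [hpX t' ht' y]; ring
      have hin : HasDerivAt (fun y : ℝ => y * t' ^ (-ρ / 2)) (t' ^ (-ρ / 2)) x' := by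
        simpa using (hasDerivAt_id x').mul_const (t' ^ (-ρ / 2))
      have this1 := (((hφ1d (x' * t' ^ (-ρ / 2))).comp x' hin)).const_mul
        (t' ^ (ρ / 2 - 1) * t' ^ (-ρ / 2))
      have hD : HasDerivAt (fun y => partialX u t' y)
          (t' ^ (ρ / 2 - 1) * t' ^ (-ρ / 2) * (φ2 (x' * t' ^ (-ρ / 2)) * t' ^ (-ρ / 2))) x' := by
        rw [heq]; exact this1
      rw [partialXX, hD.deriv]; ring
    -- time derivative of u
    have hrp : HasDerivAt (fun s : ℝ => s ^ (ρ / 2 - 1))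
        ((ρ / 2 - 1) * t ^ (ρ / 2 - 1 - 1)) t :=
      Real.hasDerivAt_rpow_const (Or.inl htne)
    have hsin : HasDerivAt (fun s : ℝ => x * s ^ (-ρ / 2))
        (x * (-ρ / 2 * t ^ (-ρ / 2 - 1))) t :=
      (Real.hasDerivAt_rpow_const (Or.inl htne)).const_mul x
    have hPT : partialT u t x = (ρ / 2 - 1) * t ^ (ρ / 2 - 1 - 1) * φ (x * t ^ (-ρ / 2))
        + t ^ (ρ / 2 - 1) * (φ1 (x * t ^ (-ρ / 2)) * (x * (-ρ / 2 * t ^ (-ρ / 2 - 1)))) := by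
      have heq : (fun s => u s x) = fun s => s ^ (ρ / 2 - 1) * φ (x * s ^ (-ρ / 2)) := by
        funext s; exact hu s x
      rw [partialT, heq]
      exact (hrp.mul ((hφd (x * t ^ (-ρ / 2))).comp t hsin)).deriv
    -- time derivative of partialXX
    have hg : HasDerivAt (fun s : ℝ => s ^ (-ρ / 2 - 1) * φ2 (x * s ^ (-ρ / 2)))
        ((-ρ / 2 - 1) * t ^ (-ρ / 2 - 1 - 1) * φ2 (x * t ^ (-ρ / 2))
          + t ^ (-ρ / 2 - 1) * (φ3 (x * t ^ (-ρ / 2)) * (x * (-ρ / 2 * t ^ (-ρ / 2 - 1))))) t :=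
      (Real.hasDerivAt_rpow_const (Or.inl htne)).mul
        (by have hc := (hφ2d (x * t ^ (-ρ / 2))).comp t hsin; exact hc)
    have hPXXT : partialXXT u t x
        = (-ρ / 2 - 1) * t ^ (-ρ / 2 - 1 - 1) * φ2 (x * t ^ (-ρ / 2))
          + t ^ (-ρ / 2 - 1) * (φ3 (x * t ^ (-ρ / 2)) * (x * (-ρ / 2 * t ^ (-ρ / 2 - 1)))) := by
      rw [partialXXT]
      have hev : (fun s => partialXX u s x)
          =ᶠ[nhds t] fun s : ℝ => s ^ (-ρ / 2 - 1) * φ2 (x * s ^ (-ρ / 2)) := by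
        filter_upwards [Ioi_mem_nhds ht] with s hs
        rw [hpXX s (ne_of_gt hs) x]
        have hs' : (0:ℝ) < s := hs
        rw [← Real.rpow_add hs', ← Real.rpow_add hs']
        ring_nf
      rw [hev.deriv_eq, hg.deriv]
    -- now assemble
    rw [hPT, hPXXT, hpXX t htne x, hpX t htne x, hu t x]
    set ω := x * t ^ (-ρ / 2) with hω
    set Q := t ^ (ρ / 2) with hQ
    have hQpos : (0:ℝ) < Q := Real.rpow_pos_of_pos ht _
    have hQne : Q ≠ 0 := hQpos.ne'
    have E2 : t ^ (-ρ / 2) = Q⁻¹ := by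
      rw [show -ρ / 2 = -(ρ / 2) by ring, Real.rpow_neg ht.le, hQ]
    have E1 : t ^ (ρ / 2 - 1) = Q * t⁻¹ := by
      rw [show ρ / 2 - 1 = ρ / 2 + (-1) by ring, Real.rpow_add ht, Real.rpow_neg_one, hQ]
    have E3 : t ^ (ρ / 2 - 1 - 1) = Q * (t⁻¹ * t⁻¹) := by
      rw [show ρ / 2 - 1 - 1 = ρ / 2 + (-1) + (-1) by ring, Real.rpow_add ht,
        Real.rpow_add ht, Real.rpow_neg_one, hQ]; ring
    have E4 : t ^ (-ρ / 2 - 1) = Q⁻¹ * t⁻¹ := by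
      rw [show -ρ / 2 - 1 = -(ρ / 2) + (-1) by ring, Real.rpow_add ht,
        Real.rpow_neg ht.le, Real.rpow_neg_one, hQ]
    have E5 : t ^ (-ρ / 2 - 1 - 1) = Q⁻¹ * (t⁻¹ * t⁻¹) := by
      rw [show -ρ / 2 - 1 - 1 = -(ρ / 2) + (-1) + (-1) by ring, Real.rpow_add ht,
        Real.rpow_add ht, Real.rpow_neg ht.le, Real.rpow_neg_one, hQ]; ring
    have E6 : t ^ (ρ - 1) = Q * Q * t⁻¹ := by
      rw [show ρ - 1 = ρ / 2 + ρ / 2 + (-1) by ring, Real.rpow_add ht,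
        Real.rpow_add ht, Real.rpow_neg_one, hQ]
    have E7 : t ^ ρ = Q * Q := by
      rw [show ρ = ρ / 2 + ρ / 2 by ring, Real.rpow_add ht, hQ]
    have E8 : t ^ ((ρ - 4) / 2) = Q * (t⁻¹ * t⁻¹) := by
      rw [show (ρ - 4) / 2 = ρ / 2 + (-1) + (-1) by ring, Real.rpow_add ht,
        Real.rpow_add ht, Real.rpow_neg_one, hQ]; ring
    have hx : x = ω * Q := by
      rw [hω, E2]; field_simp
    rw [E1, E2, E3, E4, E5, E6, E7, E8, hx]
    have hodeω := hode ω
    rw [i2, i3] at hodeω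
    clear_value ω Q
    field_simp
    linear_combination (-1 : ℝ) * hodeω
end

section
/- Let ε, λ, δ, α be real constants with ελ ≠ 0, and let φ : ℝ → ℝ be a smooth solution of the ODE εα φ''' + (ε − λ)φ'' − φφ' + αφ' + φ + δ = 0 (in the variable ω). Then the function u(t,x) = (1/t)·φ(x − α ln t) is a smooth solution of u_t + u u_x + λ t^{−1} u_{xx} + ε u_{xxt} = δ t^{−2} on the domain t > 0. -/
/-- the ansatz `u = (1/t) φ(x - α ln t)` turns any smooth solution of the
reduced ODE `εα φ''' + (ε - λ)φ'' - φφ' + αφ' + φ + δ = 0` into a smooth solution of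
`u_t + u u_x + λ t⁻¹ u_xx + ε u_xxt = δ t⁻²` on `t > 0`. -/
theorem stmt_9 (ε lam δ α : ℝ) (h : ε * lam ≠ 0)
    (φ : ℝ → ℝ) (hφ : ContDiff ℝ (⊤ : ℕ∞) φ)
    (hode : ∀ ω, ε * α * iteratedDeriv 3 φ ω + (ε - lam) * iteratedDeriv 2 φ ω
      - φ ω * deriv φ ω + α * deriv φ ω + φ ω + δ = 0)
    (u : ℝ → ℝ → ℝ)
    (hu : ∀ t x, u t x = 1 / t * φ (x - α * Real.log t)) :
    ContDiffOn ℝ (⊤ : ℕ∞) (fun p : ℝ × ℝ => u p.1 p.2) (Set.Ioi 0 ×ˢ Set.univ) ∧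
    ∀ t, 0 < t → ∀ x, partialT u t x + u t x * partialX u t x
      + lam * t ^ (-1 : ℝ) * partialXX u t x + ε * partialXXT u t x
      = δ * t ^ (-2 : ℝ) := by
  have hφ1 : Differentiable ℝ φ := hφ.differentiable (by simp)
  have hφd : ContDiff ℝ (⊤ : ℕ∞) (deriv φ) := (contDiff_infty_iff_deriv.mp hφ).2
  have hφ2 : Differentiable ℝ (deriv φ) := hφd.differentiable (by simp)
  have hφdd : ContDiff ℝ (⊤ : ℕ∞) (deriv (deriv φ)) := (contDiff_infty_iff_deriv.mp hφd).2
  have hφ3 : Differentiable ℝ (deriv (deriv φ)) := hφdd.differentiable (by simp)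
  have h2eq : iteratedDeriv 2 φ = deriv (deriv φ) := by
    simp [iteratedDeriv_succ, iteratedDeriv_one]
  have h3eq : iteratedDeriv 3 φ = deriv (deriv (deriv φ)) := by
    simp [iteratedDeriv_succ, iteratedDeriv_one]
  -- partialX
  have hux : ∀ t x, partialX u t x = 1 / t * deriv φ (x - α * Real.log t) := by
    intro t x
    have he : (fun y => u t y) = fun y => 1 / t * φ (y - α * Real.log t) :=
      funext fun y => hu t y
    have h1 : HasDerivAt (fun y => φ (y - α * Real.log t))
        (deriv φ (x - α * Real.log t)) x := by
      have := ((hφ1 (x - α * Real.log t)).hasDerivAt).comp x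
        ((hasDerivAt_id x).sub_const (α * Real.log t))
      simpa [Function.comp_def] using this
    rw [partialX, he, (h1.const_mul (1 / t)).deriv]
  have huxx : ∀ t x, partialXX u t x = 1 / t * deriv (deriv φ) (x - α * Real.log t) := by
    intro t x
    have he : (fun y => partialX u t y) = fun y => 1 / t * deriv φ (y - α * Real.log t) :=
      funext fun y => hux t y
    have h1 : HasDerivAt (fun y => deriv φ (y - α * Real.log t))
        (deriv (deriv φ) (x - α * Real.log t)) x := by
      have := ((hφ2 (x - α * Real.log t)).hasDerivAt).comp x
        ((hasDerivAt_id x).sub_const (α * Real.log t))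
      simpa [Function.comp_def] using this
    rw [partialXX, he, (h1.const_mul (1 / t)).deriv]
  constructor
  · have he : (fun p : ℝ × ℝ => u p.1 p.2)
        = fun p : ℝ × ℝ => 1 / p.1 * φ (p.2 - α * Real.log p.1) :=
      funext fun p => hu p.1 p.2
    rw [he]
    intro p hp
    have hne : p.1 ≠ 0 := ne_of_gt hp.1
    refine ContDiffAt.contDiffWithinAt ?_
    have h1 : ContDiffAt ℝ (⊤ : ℕ∞) (fun p : ℝ × ℝ => 1 / p.1) p :=
      contDiffAt_const.div contDiffAt_fst hne
    have hlog : ContDiffAt ℝ (⊤ : ℕ∞) (fun p : ℝ × ℝ => Real.log p.1) p :=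
      (Real.contDiffAt_log.mpr hne).comp p contDiffAt_fst
    exact h1.mul (hφ.contDiffAt.comp p (contDiffAt_snd.sub (contDiffAt_const.mul hlog)))
  · intro t ht x
    have hne : t ≠ 0 := ne_of_gt ht
    set ω := x - α * Real.log t with hω
    -- time derivative helper
    have key : ∀ (f : ℝ → ℝ), Differentiable ℝ f →
        HasDerivAt (fun s => 1 / s * f (x - α * Real.log s))
          (-(1 / t ^ 2) * f ω + 1 / t * (deriv f ω * -(α * t⁻¹))) t := by
      intro f hf
      have hinv : HasDerivAt (fun s : ℝ => 1 / s) (-(1 / t ^ 2)) t := by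
        simpa [one_div] using hasDerivAt_inv hne
      have hin : HasDerivAt (fun s : ℝ => x - α * Real.log s) (-(α * t⁻¹)) t := by
        simpa using (((Real.hasDerivAt_log hne).const_mul α).const_sub x)
      have hcomp : HasDerivAt (fun s => f (x - α * Real.log s)) (deriv f ω * -(α * t⁻¹)) t :=
        ((hf ω).hasDerivAt).comp t hin
      exact hinv.mul hcomp
    have hut : partialT u t x = -(1 / t ^ 2) * φ ω + 1 / t * (deriv φ ω * -(α * t⁻¹)) := by
      have he : (fun s => u s x) = fun s => 1 / s * φ (x - α * Real.log s) :=
        funext fun s => hu s x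
      rw [partialT, he, (key φ hφ1).deriv]
    have huxxt : partialXXT u t x
        = -(1 / t ^ 2) * deriv (deriv φ) ω + 1 / t * (deriv (deriv (deriv φ)) ω * -(α * t⁻¹)) := by
      have he : (fun s => partialXX u s x)
          = fun s => 1 / s * deriv (deriv φ) (x - α * Real.log s) :=
        funext fun s => huxx s x
      rw [partialXXT, he, (key (deriv (deriv φ)) hφ3).deriv]
    have hodeω := hode ω
    rw [h2eq, h3eq] at hodeω
    have hr1 : t ^ (-1 : ℝ) = t⁻¹ := by
      rw [Real.rpow_neg ht.le, Real.rpow_one]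
    have hr2 : t ^ (-2 : ℝ) = (t ^ 2)⁻¹ := by
      rw [Real.rpow_neg ht.le, show (2:ℝ) = ((2:ℕ):ℝ) by norm_num, Real.rpow_natCast]
    rw [hut, huxxt, hux, huxx, hu, hr1, hr2]
    rw [← hω]
    linear_combination (-(1 / t ^ 2)) * hodeω
end

section
/- Let ε, λ, δ be real constants with ελ ≠ 0, and let φ : ℝ → ℝ be a smooth solution of the ODE ε ω φ''' + (ε − 2λ)φ'' − 2φφ' + ωφ' − φ + 2δ = 0 (in the variable ω). Then the function u(t,x) = e^{t/2} φ(x e^{−t/2}) is a smooth solution of u_t + u u_x + λ e^{t} u_{xx} + ε e^{t} u_{xxt} = δ e^{t/2} on ℝ × ℝ. -/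
/-- the ansatz `u = e^{t/2} φ(x e^{-t/2})` turns any smooth solution of
the reduced ODE `εω φ''' + (ε - 2λ)φ'' - 2φφ' + ωφ' - φ + 2δ = 0` into a smooth
solution of `u_t + u u_x + λ e^t u_xx + ε e^t u_xxt = δ e^{t/2}` on `ℝ × ℝ`. -/
theorem stmt_10 (ε lam δ : ℝ) (h : ε * lam ≠ 0)
    (φ : ℝ → ℝ) (hφ : ContDiff ℝ (⊤ : ℕ∞) φ)
    (hode : ∀ ω, ε * ω * iteratedDeriv 3 φ ω + (ε - 2 * lam) * iteratedDeriv 2 φ ω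
      - 2 * φ ω * deriv φ ω + ω * deriv φ ω - φ ω + 2 * δ = 0)
    (u : ℝ → ℝ → ℝ)
    (hu : ∀ t x, u t x = Real.exp (t / 2) * φ (x * Real.exp (-t / 2))) :
    ContDiff ℝ (⊤ : ℕ∞) (fun p : ℝ × ℝ => u p.1 p.2) ∧
    ∀ t x, partialT u t x + u t x * partialX u t x
      + lam * Real.exp t * partialXX u t x + ε * Real.exp t * partialXXT u t x
      = δ * Real.exp (t / 2) := by
  have hφd : Differentiable ℝ φ := hφ.differentiable (by simp)
  have hφ1 : ContDiff ℝ (⊤ : ℕ∞) (deriv φ) := (contDiff_infty_iff_deriv.mp hφ).2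
  have hφ1d : Differentiable ℝ (deriv φ) := hφ1.differentiable (by simp)
  have hφ2 : ContDiff ℝ (⊤ : ℕ∞) (deriv (deriv φ)) := (contDiff_infty_iff_deriv.mp hφ1).2
  have hφ2d : Differentiable ℝ (deriv (deriv φ)) := hφ2.differentiable (by simp)
  set φ1 := deriv φ with hφ1def
  set φ2 := deriv (deriv φ) with hφ2def
  set φ3 := deriv (deriv (deriv φ)) with hφ3def
  have hit2 : iteratedDeriv 2 φ = φ2 := by
    rw [show (2 : ℕ) = 1 + 1 from rfl, iteratedDeriv_succ, iteratedDeriv_one]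
  have hit3 : iteratedDeriv 3 φ = φ3 := by
    rw [show (3 : ℕ) = 2 + 1 from rfl, iteratedDeriv_succ, hit2]
  simp only [hit2, hit3] at hode
  -- partial X
  have hX : ∀ t x, partialX u t x = φ1 (x * Real.exp (-t / 2)) := by
    intro t x
    have hfun : (fun y => u t y) = fun y => Real.exp (t / 2) * φ (y * Real.exp (-t / 2)) :=
      funext fun y => hu t y
    have hac : Real.exp (t / 2) * Real.exp (-t / 2) = 1 := by
      rw [← Real.exp_add, show t / 2 + -t / 2 = 0 by ring, Real.exp_zero]
    have hder : HasDerivAt (fun y => Real.exp (t / 2) * φ (y * Real.exp (-t / 2)))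
        (Real.exp (t / 2) * (φ1 (x * Real.exp (-t / 2)) * Real.exp (-t / 2))) x :=
      (((hφd _).hasDerivAt.comp x (hasDerivAt_mul_const _))).const_mul _
    rw [partialX, hfun, hder.deriv]
    linear_combination φ1 (x * Real.exp (-t / 2)) * hac
  -- partial XX
  have hXX : ∀ t x, partialXX u t x = Real.exp (-t / 2) * φ2 (x * Real.exp (-t / 2)) := by
    intro t x
    have hfun : (fun y => partialX u t y) = fun y => φ1 (y * Real.exp (-t / 2)) :=
      funext fun y => hX t y
    have hder : HasDerivAt (fun y => φ1 (y * Real.exp (-t / 2)))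
        (φ2 (x * Real.exp (-t / 2)) * Real.exp (-t / 2)) x :=
      (hφ1d _).hasDerivAt.comp x (hasDerivAt_mul_const _)
    rw [partialXX, hfun, hder.deriv, mul_comm]
  -- derivative of t ↦ exp(-t/2)
  have hinner : ∀ t x : ℝ, HasDerivAt (fun s : ℝ => x * Real.exp (-s / 2))
      (x * (Real.exp (-t / 2) * (-1 / 2))) t := by
    intro t x
    exact (((hasDerivAt_id t).neg.div_const 2).exp).const_mul x
  -- partial T
  have hT : ∀ t x, partialT u t x = Real.exp (t / 2) * φ (x * Real.exp (-t / 2)) / 2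
      - Real.exp (t / 2) * (Real.exp (-t / 2) * x * φ1 (x * Real.exp (-t / 2))) / 2 := by
    intro t x
    have hfun : (fun s => u s x) = fun s => Real.exp (s / 2) * φ (x * Real.exp (-s / 2)) :=
      funext fun s => hu s x
    have hf : HasDerivAt (fun s : ℝ => Real.exp (s / 2)) (Real.exp (t / 2) * (1 / 2)) t :=
      ((hasDerivAt_id t).div_const 2).exp
    have hg : HasDerivAt (fun s : ℝ => φ (x * Real.exp (-s / 2)))
        (φ1 (x * Real.exp (-t / 2)) * (x * (Real.exp (-t / 2) * (-1 / 2)))) t :=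
      (hφd _).hasDerivAt.comp t (hinner t x)
    have hder : HasDerivAt (fun s => Real.exp (s / 2) * φ (x * Real.exp (-s / 2))) _ t := hf.mul hg
    rw [partialT, hfun, hder.deriv]
    ring
  -- partial XXT
  have hXXT : ∀ t x, partialXXT u t x =
      -(Real.exp (-t / 2) * φ2 (x * Real.exp (-t / 2))) / 2
      - Real.exp (-t / 2) * (Real.exp (-t / 2) * x * φ3 (x * Real.exp (-t / 2))) / 2 := by
    intro t x
    have hfun : (fun s => partialXX u s x)
        = fun s => Real.exp (-s / 2) * φ2 (x * Real.exp (-s / 2)) :=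
      funext fun s => hXX s x
    have hf : HasDerivAt (fun s : ℝ => Real.exp (-s / 2)) (Real.exp (-t / 2) * (-1 / 2)) t :=
      ((hasDerivAt_id t).neg.div_const 2).exp
    have hg : HasDerivAt (fun s : ℝ => φ2 (x * Real.exp (-s / 2)))
        (φ3 (x * Real.exp (-t / 2)) * (x * (Real.exp (-t / 2) * (-1 / 2)))) t :=
      (hφ2d _).hasDerivAt.comp t (hinner t x)
    have hder : HasDerivAt (fun s => Real.exp (-s / 2) * φ2 (x * Real.exp (-s / 2))) _ t := hf.mul hg
    rw [partialXXT, hfun, hder.deriv]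
    ring
  constructor
  · have hfun : (fun p : ℝ × ℝ => u p.1 p.2)
        = fun p : ℝ × ℝ => Real.exp (p.1 / 2) * φ (p.2 * Real.exp (-p.1 / 2)) :=
      funext fun p => hu p.1 p.2
    rw [hfun]
    exact (Real.contDiff_exp.comp (contDiff_fst.div_const 2)).mul
      (hφ.comp (contDiff_snd.mul (Real.contDiff_exp.comp (contDiff_fst.neg.div_const 2))))
  · intro t x
    have hac : Real.exp (t / 2) * Real.exp (-t / 2) = 1 := by
      rw [← Real.exp_add, show t / 2 + -t / 2 = 0 by ring, Real.exp_zero]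
    have he : Real.exp t = Real.exp (t / 2) * Real.exp (t / 2) := by
      rw [← Real.exp_add, show t / 2 + t / 2 = t by ring]
    rw [hT t x, hX t x, hXX t x, hXXT t x, hu t x, he]
    set a := Real.exp (t / 2)
    set c := Real.exp (-t / 2)
    set ω := x * c
    linear_combination (-(a) / 2) * hode ω
      + (lam * a * φ2 ω - ε * a * φ2 ω / 2 - ε * a * c * x * φ3 ω / 2) * hac
end

section
/- Let ε, λ, δ, ρ be real constants with ρ ≠ 0. Then the function u(t,x) = x/t + (2δ/ρ)·t^{ρ/2 − 1} is a smooth solution of u_t + u u_x + λ t^{ρ−1} u_{xx} + ε t^{ρ} u_{xxt} = δ t^{(ρ−4)/2} on the domain t > 0. -/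
/-- `u(t,x) = x/t + (2δ/ρ) t^{ρ/2-1}` is a "degenerate" exact solution of
`u_t + u u_x + λ t^{ρ-1} u_xx + ε t^ρ u_xxt = δ t^{(ρ-4)/2}` on the domain `t > 0`. -/
theorem stmt_13 (ε lam δ ρ : ℝ) (hρ : ρ ≠ 0)
    (u : ℝ → ℝ → ℝ)
    (hu : ∀ t x, u t x = x / t + 2 * δ / ρ * t ^ (ρ / 2 - 1)) :
    ContDiffOn ℝ (⊤ : ℕ∞) (fun p : ℝ × ℝ => u p.1 p.2) (Set.Ioi 0 ×ˢ Set.univ) ∧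
    ∀ t, 0 < t → ∀ x, partialT u t x + u t x * partialX u t x
      + lam * t ^ (ρ - 1) * partialXX u t x + ε * t ^ ρ * partialXXT u t x
      = δ * t ^ ((ρ - 4) / 2) := by
  have hfun : (fun p : ℝ × ℝ => u p.1 p.2)
      = fun p : ℝ × ℝ => p.2 / p.1 + 2 * δ / ρ * p.1 ^ (ρ / 2 - 1) :=
    funext fun p => hu p.1 p.2
  have hX : ∀ t x, partialX u t x = 1 / t := by
    intro t x
    unfold partialX
    have h1 : (fun y => u t y) = fun y => y * (1 / t) + 2 * δ / ρ * t ^ (ρ / 2 - 1) :=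
      funext fun y => by rw [hu]; ring
    rw [h1, deriv_add_const, deriv_mul_const differentiable_id.differentiableAt, deriv_id'']
    ring
  have hXX : ∀ t x, partialXX u t x = 0 := by
    intro t x
    unfold partialXX
    have h1 : (fun y => partialX u t y) = fun _ => 1 / t := funext fun y => hX t y
    rw [h1, deriv_const]
  have hXXT : ∀ t x, partialXXT u t x = 0 := by
    intro t x
    unfold partialXXT
    have h1 : (fun s => partialXX u s x) = fun _ => (0:ℝ) := funext fun s => hXX s x
    rw [h1, deriv_const]
  constructor
  · rw [hfun]
    apply ContDiffOn.add
    · exact contDiff_snd.contDiffOn.div contDiff_fst.contDiffOn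
        (fun p hp => ne_of_gt hp.1)
    · have h2 : ContDiffOn ℝ (⊤ : ℕ∞) (fun x : ℝ => x ^ (ρ / 2 - 1)) (Set.Ioi 0) :=
        fun x hx => (Real.contDiffAt_rpow_const_of_ne (ne_of_gt hx)).contDiffWithinAt
      exact contDiffOn_const.mul (h2.comp contDiff_fst.contDiffOn (fun p hp => hp.1))
  · intro t ht x
    have htne : t ≠ 0 := ne_of_gt ht
    have hT : partialT u t x
        = -x / t ^ 2 + 2 * δ / ρ * ((ρ / 2 - 1) * t ^ (ρ / 2 - 1 - 1)) := by
      unfold partialT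
      have h1 : (fun s => u s x)
          = fun s => x * s⁻¹ + 2 * δ / ρ * s ^ (ρ / 2 - 1) :=
        funext fun s => by rw [hu]; ring
      rw [h1]
      have hd : HasDerivAt (fun s : ℝ => x * s⁻¹ + 2 * δ / ρ * s ^ (ρ / 2 - 1))
          (x * (-(t ^ 2)⁻¹) + 2 * δ / ρ * ((ρ / 2 - 1) * t ^ (ρ / 2 - 1 - 1))) t :=
        ((hasDerivAt_inv htne).const_mul x).add
          ((Real.hasDerivAt_rpow_const (Or.inl htne)).const_mul (2 * δ / ρ))
      rw [hd.deriv]; ring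
    rw [hT, hX, hXX, hXXT, hu]
    have e1 : t ^ (ρ / 2 - 1 - 1) = t ^ ((ρ - 4) / 2) := by ring_nf
    have e2 : t ^ (ρ / 2 - 1) = t ^ ((ρ - 4) / 2) * t := by
      rw [← Real.rpow_add_one htne]; congr 1; ring
    rw [e1, e2]
    have h2ne : t ^ 2 ≠ 0 := pow_ne_zero 2 htne
    field_simp
    ring
end

section
/- Let ε, λ, δ, c be real constants. Then the function u(t,x) = (x + δ ln t + c)/t is a smooth solution of u_t + u u_x + λ t^{−1} u_{xx} + ε u_{xxt} = δ t^{−2} on the domain t > 0. -/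
/-- `u(t,x) = (x + δ ln t + c)/t` is a "degenerate" exact solution of
`u_t + u u_x + λ t⁻¹ u_xx + ε u_xxt = δ t⁻²` on the domain `t > 0`. -/
theorem stmt_15 (ε lam δ c : ℝ)
    (u : ℝ → ℝ → ℝ)
    (hu : ∀ t x, u t x = (x + δ * Real.log t + c) / t) :
    ContDiffOn ℝ (⊤ : ℕ∞) (fun p : ℝ × ℝ => u p.1 p.2) (Set.Ioi 0 ×ˢ Set.univ) ∧
    ∀ t, 0 < t → ∀ x, partialT u t x + u t x * partialX u t x
      + lam * t ^ (-1 : ℝ) * partialXX u t x + ε * partialXXT u t x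
      = δ * t ^ (-2 : ℝ) := by
  have hfun : u = fun t x => (x + δ * Real.log t + c) / t := by
    funext t x; exact hu t x
  subst hfun
  -- partial derivative in x is t⁻¹ for every t (including t = 0, where both sides are 0)
  have hX : ∀ t y : ℝ, partialX (fun t x => (x + δ * Real.log t + c) / t) t y = t⁻¹ := by
    intro t y
    unfold partialX
    rcases eq_or_ne t 0 with rfl | htne
    · simp
    · have heq : (fun y : ℝ => (y + δ * Real.log t + c) / t)
          = fun y : ℝ => (y + (δ * Real.log t + c)) / t := by
        funext z; ring_nf
      rw [heq]
      have h := ((hasDerivAt_id y).add_const (δ * Real.log t + c)).div_const t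
      have hd := h.deriv
      simp only [id_eq] at hd
      rw [hd, one_div]
  have hXX : ∀ t y : ℝ, partialXX (fun t x => (x + δ * Real.log t + c) / t) t y = 0 := by
    intro t y
    unfold partialXX
    have heq : (fun z : ℝ => partialX (fun t x => (x + δ * Real.log t + c) / t) t z)
        = fun _ : ℝ => t⁻¹ := by
      funext z; exact hX t z
    rw [heq]
    exact deriv_const _ _
  constructor
  · have h1 : ContDiffOn ℝ (⊤ : ℕ∞) (fun p : ℝ × ℝ => p.2 + δ * Real.log p.1 + c)
        (Set.Ioi 0 ×ˢ Set.univ) := by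
      apply ContDiffOn.add
      · apply ContDiffOn.add contDiffOn_snd
        exact contDiffOn_const.mul (Real.contDiffOn_log.comp contDiffOn_fst
          (fun p hp => Set.mem_compl_singleton_iff.mpr (ne_of_gt hp.1)))
      · exact contDiffOn_const
    exact h1.div contDiffOn_fst (fun p hp => ne_of_gt hp.1)
  · intro t ht x
    have htne : t ≠ 0 := ne_of_gt ht
    -- time derivative
    have hT : partialT (fun t x => (x + δ * Real.log t + c) / t) t x
        = (δ * t⁻¹ * t - (δ * Real.log t + (x + c)) * 1) / t ^ 2 := by
      unfold partialT
      have heq : (fun s : ℝ => (x + δ * Real.log s + c) / s)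
          = fun s : ℝ => (δ * Real.log s + (x + c)) / s := by
        funext s; ring_nf
      rw [heq]
      have hN : HasDerivAt (fun s : ℝ => δ * Real.log s + (x + c)) (δ * t⁻¹) t :=
        ((Real.hasDerivAt_log htne).const_mul δ).add_const (x + c)
      have h := hN.div (hasDerivAt_id t) htne
      exact h.deriv
    have hXXT : partialXXT (fun t x => (x + δ * Real.log t + c) / t) t x = 0 := by
      unfold partialXXT
      have heq : (fun s : ℝ => partialXX (fun t x => (x + δ * Real.log t + c) / t) s x)
          = fun _ : ℝ => (0 : ℝ) := by
        funext s; exact hXX s x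
      rw [heq]
      exact deriv_const _ _
    rw [hT, hXXT, hXX t x, hX t x]
    have h1 : t ^ (-1 : ℝ) = t⁻¹ := by
      rw [show (-1 : ℝ) = ((-1 : ℤ) : ℝ) by norm_num, Real.rpow_intCast]; simp
    have h2 : t ^ (-2 : ℝ) = (t ^ 2)⁻¹ := by
      rw [show (-2 : ℝ) = -(2:ℕ) by norm_num, Real.rpow_neg ht.le, Real.rpow_natCast]
    rw [h1, h2]
    field_simp
    ring
end

section
/- Let ε be a nonzero real constant and let s ∈ {1, −1}. Then the function φ(ω) = s(1 − 12ε)/(10ε) − (12/5)·tanh(ω) + s·(6/5)·tanh²(ω) is a solution of the ODE εα φ''' + φ'' − φφ' + αφ' = 0 for all ω ∈ ℝ, where α = s/(10ε). -/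
lemma tanh_hasDerivAt (x : ℝ) : HasDerivAt Real.tanh (1 - Real.tanh x ^ 2) x := by
  have hc : Real.cosh x ≠ 0 := (Real.cosh_pos x).ne'
  have h := (Real.hasDerivAt_sinh x).div (Real.hasDerivAt_cosh x) hc
  have he : Real.tanh = fun y => Real.sinh y / Real.cosh y :=
    funext fun y => Real.tanh_eq_sinh_div_cosh y
  rw [show Real.sinh / Real.cosh = Real.tanh from he.symm] at h
  refine h.congr_deriv ?_
  rw [Real.tanh_eq_sinh_div_cosh]
  have := Real.cosh_sq_sub_sinh_sq x
  field_simp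

/-- for `s = ±1` and `α = s/(10ε)`, the function
`φ(ω) = s(1-12ε)/(10ε) - (12/5)tanh ω + s(6/5)tanh² ω`
solves the reduced traveling-wave ODE `εα φ''' + φ'' - φφ' + αφ' = 0` on `ℝ`. -/
theorem stmt_19 (ε : ℝ) (hε : ε ≠ 0) (s : ℝ) (hs : s = 1 ∨ s = -1)
    (α : ℝ) (hα : α = s / (10 * ε))
    (φ : ℝ → ℝ)
    (hφ : ∀ ω, φ ω = s * (1 - 12 * ε) / (10 * ε)
      - 12 / 5 * Real.tanh ω + s * (6 / 5) * Real.tanh ω ^ 2) :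
    ∀ ω, ε * α * iteratedDeriv 3 φ ω + iteratedDeriv 2 φ ω
      - φ ω * deriv φ ω + α * deriv φ ω = 0 := by
  have hφe : φ = fun ω => s * (1 - 12 * ε) / (10 * ε)
      - 12 / 5 * Real.tanh ω + s * (6 / 5) * Real.tanh ω ^ 2 := funext hφ
  -- first derivative
  have h1 : ∀ x, HasDerivAt φ
      (12 * s / 5 * Real.tanh x - 12 / 5 + 12 / 5 * Real.tanh x ^ 2
        - 12 * s / 5 * Real.tanh x ^ 3) x := by
    intro x
    rw [hφe]
    have h := ((hasDerivAt_const x (s * (1 - 12 * ε) / (10 * ε))).sub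
        ((tanh_hasDerivAt x).const_mul (12 / 5))).add
        (((tanh_hasDerivAt x).pow 2).const_mul (s * (6 / 5)))
    refine h.congr_deriv ?_
    ring
  have dφ : deriv φ = fun x => 12 * s / 5 * Real.tanh x - 12 / 5 + 12 / 5 * Real.tanh x ^ 2
      - 12 * s / 5 * Real.tanh x ^ 3 := funext fun x => (h1 x).deriv
  -- second derivative
  have h2 : ∀ x, HasDerivAt (fun x => 12 * s / 5 * Real.tanh x - 12 / 5
      + 12 / 5 * Real.tanh x ^ 2 - 12 * s / 5 * Real.tanh x ^ 3)
      (12 * s / 5 + 24 / 5 * Real.tanh x - 48 * s / 5 * Real.tanh x ^ 2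
        - 24 / 5 * Real.tanh x ^ 3 + 36 * s / 5 * Real.tanh x ^ 4) x := by
    intro x
    have h := ((((tanh_hasDerivAt x).const_mul (12 * s / 5)).sub
        (hasDerivAt_const x (12 / 5))).add
        (((tanh_hasDerivAt x).pow 2).const_mul (12 / 5))).sub
        (((tanh_hasDerivAt x).pow 3).const_mul (12 * s / 5))
    refine h.congr_deriv ?_
    ring
  have dφ2 : deriv (deriv φ) = fun x => 12 * s / 5 + 24 / 5 * Real.tanh x
      - 48 * s / 5 * Real.tanh x ^ 2 - 24 / 5 * Real.tanh x ^ 3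
      + 36 * s / 5 * Real.tanh x ^ 4 := by
    rw [dφ]; exact funext fun x => (h2 x).deriv
  -- third derivative
  have h3 : ∀ x, HasDerivAt (fun x => 12 * s / 5 + 24 / 5 * Real.tanh x
      - 48 * s / 5 * Real.tanh x ^ 2 - 24 / 5 * Real.tanh x ^ 3
      + 36 * s / 5 * Real.tanh x ^ 4)
      (24 / 5 - 96 * s / 5 * Real.tanh x - 96 / 5 * Real.tanh x ^ 2
        + 240 * s / 5 * Real.tanh x ^ 3 + 72 / 5 * Real.tanh x ^ 4
        - 144 * s / 5 * Real.tanh x ^ 5) x := by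
    intro x
    have h := ((((hasDerivAt_const x (12 * s / 5)).add
        ((tanh_hasDerivAt x).const_mul (24 / 5))).sub
        (((tanh_hasDerivAt x).pow 2).const_mul (48 * s / 5))).sub
        (((tanh_hasDerivAt x).pow 3).const_mul (24 / 5))).add
        (((tanh_hasDerivAt x).pow 4).const_mul (36 * s / 5))
    refine h.congr_deriv ?_
    ring
  have i2 : iteratedDeriv 2 φ = deriv (deriv φ) := by
    rw [iteratedDeriv_succ, iteratedDeriv_one]
  have i3 : iteratedDeriv 3 φ = deriv (deriv (deriv φ)) := by
    rw [iteratedDeriv_succ, i2]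
  intro ω
  rw [i3, i2, dφ2, hφ, dφ]
  have d3 : deriv (fun x => 12 * s / 5 + 24 / 5 * Real.tanh x
      - 48 * s / 5 * Real.tanh x ^ 2 - 24 / 5 * Real.tanh x ^ 3
      + 36 * s / 5 * Real.tanh x ^ 4) ω
      = 24 / 5 - 96 * s / 5 * Real.tanh ω - 96 / 5 * Real.tanh ω ^ 2
        + 240 * s / 5 * Real.tanh ω ^ 3 + 72 / 5 * Real.tanh ω ^ 4
        - 144 * s / 5 * Real.tanh ω ^ 5 := (h3 ω).deriv
  rw [d3, hα]
  rcases hs with rfl | rfl <;> · field_simp; ring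
end
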